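/- arXiv:1004.3704 — 6 statements merged into one kernel-verified Lean document; each statement's English description precedes it below -/
import Mathlib

section
/- Let g: ℝ^N → [0, ∞) be continuous, and let g** denote its convex envelope. Then for every ξ ∈ ℝ^N and every δ > 0 there exist m ∈ {0,…,N}, points ξ_0,…,ξ_m ∈ ℝ^N and weights θ_0,…,θ_m ∈ (0,1] with Σ_j θ_j = 1, ξ = Σ_j θ_j ξ_j, g**(ξ) ≤ Σ_{j=0}^m θ_j g(ξ_j) ≤ g**(ξ) + δ, and such that the vectors ξ_j − ξ_0, j = 1,…,m, are linearly independent. -/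
open Set

/-- The convex envelope `g**` of `g`, as the pointwise supremum of all affine
functions lying below `g`. -/
noncomputable def convEnv {N : ℕ} (g : (Fin N → ℝ) → ℝ) (ξ : Fin N → ℝ) : ℝ :=
  sSup {r : ℝ | ∃ A : (Fin N → ℝ) →ᵃ[ℝ] ℝ, (∀ μ, A μ ≤ g μ) ∧ r = A ξ}

/-- Merge a convex combination indexed by an arbitrary type into one indexed by a
finite set of points of `E` with strictly positive weights. -/
private lemma merge_to_finset {E : Type*} [AddCommGroup E] [Module ℝ E]
    (f : E → ℝ) {ι : Type} (t : Finset ι) (w : ι → ℝ) (z : ι → E)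
    (hw0 : ∀ i ∈ t, 0 ≤ w i) :
    ∃ (s : Finset E) (v : E → ℝ),
      (∀ x ∈ s, 0 < v x) ∧
      ∑ x ∈ s, v x = ∑ i ∈ t, w i ∧
      ∑ x ∈ s, v x • x = ∑ i ∈ t, w i • z i ∧
      ∑ x ∈ s, v x * f x = ∑ i ∈ t, w i * f (z i) := by
  classical
  set v : E → ℝ := fun x => ∑ i ∈ t with z i = x, w i with hv
  have key1 : ∑ x ∈ t.image z, v x = ∑ i ∈ t, w i :=
    Finset.sum_image' _ fun i _ => rfl
  have key2 : ∑ x ∈ t.image z, v x • x = ∑ i ∈ t, w i • z i := by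
    refine Finset.sum_image' _ fun i _ => ?_
    have : ∑ j ∈ t with z j = z i, w j • z j
        = (∑ j ∈ t with z j = z i, w j) • z i := by
      rw [Finset.sum_smul]
      exact Finset.sum_congr rfl fun j hj => by rw [(Finset.mem_filter.1 hj).2]
    rw [← this]
  have key3 : ∑ x ∈ t.image z, v x * f x = ∑ i ∈ t, w i * f (z i) := by
    refine Finset.sum_image' _ fun i _ => ?_
    have : ∑ j ∈ t with z j = z i, w j * f (z j)
        = (∑ j ∈ t with z j = z i, w j) * f (z i) := by
      rw [Finset.sum_mul]
      exact Finset.sum_congr rfl fun j hj => by rw [(Finset.mem_filter.1 hj).2]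
    rw [← this]
  have hnn : ∀ x ∈ t.image z, 0 ≤ v x := fun x _ =>
    Finset.sum_nonneg fun i hi => hw0 i (Finset.mem_filter.1 hi).1
  refine ⟨(t.image z).filter fun x => 0 < v x, v,
    fun x hx => (Finset.mem_filter.1 hx).2, ?_, ?_, ?_⟩
  · rw [← key1]
    refine Finset.sum_subset (Finset.filter_subset _ _) fun x hx hx' => ?_
    have h0 := hnn x hx
    rcases h0.lt_or_eq with h | h
    · exact absurd (Finset.mem_filter.2 ⟨hx, h⟩) hx'
    · exact h.symm
  · rw [← key2]
    refine Finset.sum_subset (Finset.filter_subset _ _) fun x hx hx' => ?_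
    have h0 := hnn x hx
    rcases h0.lt_or_eq with h | h
    · exact absurd (Finset.mem_filter.2 ⟨hx, h⟩) hx'
    · rw [← h, zero_smul]
  · rw [← key3]
    refine Finset.sum_subset (Finset.filter_subset _ _) fun x hx hx' => ?_
    have h0 := hnn x hx
    rcases h0.lt_or_eq with h | h
    · exact absurd (Finset.mem_filter.2 ⟨hx, h⟩) hx'
    · rw [← h, zero_mul]

/-- Carathéodory-type reduction: a convex combination with positive weights can be
reduced, without increasing the `f`-cost, to one supported on an affinely
independent set of points. -/
private lemma reduce_aff_indep {E : Type*} [AddCommGroup E] [Module ℝ E] (f : E → ℝ) :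
    ∀ (n : ℕ) (t : Finset E) (v : E → ℝ), t.card ≤ n →
      (∀ x ∈ t, 0 < v x) → ∑ x ∈ t, v x = 1 →
      ∃ (s : Finset E) (u : E → ℝ), s ⊆ t ∧
        (∀ x ∈ s, 0 < u x) ∧ ∑ x ∈ s, u x = 1 ∧
        ∑ x ∈ s, u x • x = ∑ x ∈ t, v x • x ∧
        ∑ x ∈ s, u x * f x ≤ ∑ x ∈ t, v x * f x ∧
        AffineIndependent ℝ (fun i : s => (i : E)) := by
  intro n
  induction n with
  | zero =>
    intro t v hcard _ hsum
    rw [Nat.le_zero, Finset.card_eq_zero] at hcard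
    subst hcard
    simp at hsum
  | succ n IH =>
    intro t v hcard hpos hsum
    classical
    by_cases hAI : AffineIndependent ℝ (fun i : t => (i : E))
    · exact ⟨t, v, Finset.Subset.refl t, hpos, hsum, rfl, le_refl _, hAI⟩
    rw [affineIndependent_iff] at hAI
    push_neg at hAI
    obtain ⟨s₀, w, hw0, hwz, e, hes, hne⟩ := hAI
    set c : E → ℝ :=
      fun x => if h : x ∈ t then (if (⟨x, h⟩ : t) ∈ s₀ then w ⟨x, h⟩ else 0) else 0 with hcdef
    have hct : ∀ i : t, c i = if i ∈ s₀ then w i else 0 := fun i => by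
      rw [hcdef]
      simp only [dif_pos i.2, Subtype.coe_eta]
    have hs₀sub : t.attach ∩ s₀ = s₀ :=
      Finset.inter_eq_right.mpr fun i _ => Finset.mem_attach t i
    have hcsum : ∑ x ∈ t, c x = 0 := by
      rw [← Finset.sum_attach t c]
      calc ∑ i ∈ t.attach, c ↑i = ∑ i ∈ t.attach, if i ∈ s₀ then w i else 0 :=
            Finset.sum_congr rfl fun i _ => hct i
        _ = ∑ i ∈ s₀, w i := by rw [Finset.sum_ite_mem, hs₀sub]
        _ = 0 := hw0
    have hcvec : ∑ x ∈ t, c x • x = 0 := by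
      rw [← Finset.sum_attach t (fun x => c x • x)]
      calc ∑ i ∈ t.attach, c ↑i • (i : E)
          = ∑ i ∈ t.attach, if i ∈ s₀ then w i • (i : E) else 0 :=
            Finset.sum_congr rfl fun i _ => by rw [hct i]; split <;> simp
        _ = ∑ i ∈ s₀, w i • (i : E) := by rw [Finset.sum_ite_mem, hs₀sub]
        _ = 0 := hwz
    have hcne : c ↑e ≠ 0 := by rw [hct e, if_pos hes]; exact hne
    have het : (e : E) ∈ t := e.2
    obtain ⟨d, hdsum, hdvec, hdne, hdcost⟩ :
        ∃ d : E → ℝ, ∑ x ∈ t, d x = 0 ∧ ∑ x ∈ t, d x • x = 0 ∧ d ↑e ≠ 0 ∧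
          0 ≤ ∑ x ∈ t, d x * f x := by
      rcases le_or_gt 0 (∑ x ∈ t, c x * f x) with h | h
      · exact ⟨c, hcsum, hcvec, hcne, h⟩
      · refine ⟨fun x => -c x, ?_, ?_, neg_ne_zero.mpr hcne, ?_⟩
        · rw [Finset.sum_neg_distrib, hcsum, neg_zero]
        · simp only [neg_smul]
          rw [Finset.sum_neg_distrib, hcvec, neg_zero]
        · simp only [neg_mul]
          rw [Finset.sum_neg_distrib]
          linarith
    have hTpos : ∃ x ∈ t, 0 < d x := by
      by_contra h
      push_neg at h
      exact hdne ((Finset.sum_eq_zero_iff_of_nonpos h).mp hdsum _ het)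
    set T := t.filter fun x => 0 < d x with hT
    have hTne : T.Nonempty := by
      obtain ⟨x, hx, hdx⟩ := hTpos
      exact ⟨x, Finset.mem_filter.2 ⟨hx, hdx⟩⟩
    obtain ⟨j0, hj0T, hj0min⟩ := T.exists_min_image (fun x => v x / d x) hTne
    obtain ⟨hj0t, hdj0⟩ := Finset.mem_filter.1 hj0T
    set r := v j0 / d j0 with hrdef
    have hr : 0 < r := div_pos (hpos j0 hj0t) hdj0
    set u₀ : E → ℝ := fun x => v x - r * d x with hu₀
    have hu₀nn : ∀ x ∈ t, 0 ≤ u₀ x := by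
      intro x hx
      rcases le_or_gt (d x) 0 with hdx | hdx
      · have h1 : r * d x ≤ 0 := mul_nonpos_of_nonneg_of_nonpos hr.le hdx
        have h2 := hpos x hx
        simp only [hu₀]
        linarith
      · have hxT : x ∈ T := Finset.mem_filter.2 ⟨hx, hdx⟩
        have h1 := hj0min x hxT
        have h2 : r * d x ≤ v x := (le_div_iff₀ hdx).1 h1
        simp only [hu₀]
        linarith
    have hu₀j0 : u₀ j0 = 0 := by
      simp only [hu₀, hrdef]
      rw [div_mul_cancel₀ _ (ne_of_gt hdj0), sub_self]
    have hsum₀ : ∑ x ∈ t, u₀ x = 1 := by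
      simp only [hu₀]
      rw [Finset.sum_sub_distrib, ← Finset.mul_sum, hdsum, mul_zero, sub_zero, hsum]
    have hvec₀ : ∑ x ∈ t, u₀ x • x = ∑ x ∈ t, v x • x := by
      simp only [hu₀, sub_smul, mul_smul]
      rw [Finset.sum_sub_distrib, ← Finset.smul_sum, hdvec, smul_zero, sub_zero]
    have hcost₀ : ∑ x ∈ t, u₀ x * f x ≤ ∑ x ∈ t, v x * f x := by
      simp only [hu₀, sub_mul, mul_assoc]
      rw [Finset.sum_sub_distrib, ← Finset.mul_sum]
      nlinarith [mul_nonneg hr.le hdcost]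
    set t₂ := t.filter fun x => 0 < u₀ x with ht₂
    have ht₂sub : t₂ ⊆ t := Finset.filter_subset _ _
    have hzero₂ : ∀ x ∈ t, x ∉ t₂ → u₀ x = 0 := by
      intro x hx hx₂
      rcases (hu₀nn x hx).lt_or_eq with h | h
      · exact absurd (Finset.mem_filter.2 ⟨hx, h⟩) hx₂
      · exact h.symm
    have hcard₂ : t₂.card ≤ n := by
      have hsub' : t₂ ⊆ t.erase j0 := by
        intro x hx
        rcases Finset.mem_filter.1 hx with ⟨hxt, hxpos⟩
        refine Finset.mem_erase.2 ⟨?_, hxt⟩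
        rintro rfl
        rw [hu₀j0] at hxpos
        exact lt_irrefl 0 hxpos
      have h1 : t₂.card ≤ (t.erase j0).card := Finset.card_le_card hsub'
      have h2 : (t.erase j0).card = t.card - 1 := Finset.card_erase_of_mem hj0t
      have h3 : 1 ≤ t.card := Finset.card_pos.2 ⟨j0, hj0t⟩
      omega
    have hsum₂ : ∑ x ∈ t₂, u₀ x = 1 := by
      rw [Finset.sum_subset ht₂sub fun x hx hx₂ => hzero₂ x hx hx₂]
      exact hsum₀
    have hvec₂ : ∑ x ∈ t₂, u₀ x • x = ∑ x ∈ t, v x • x := by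
      rw [Finset.sum_subset ht₂sub fun x hx hx₂ => by rw [hzero₂ x hx hx₂, zero_smul]]
      exact hvec₀
    have hcost₂ : ∑ x ∈ t₂, u₀ x * f x ≤ ∑ x ∈ t, v x * f x := by
      rw [Finset.sum_subset ht₂sub fun x hx hx₂ => by rw [hzero₂ x hx hx₂, zero_mul]]
      exact hcost₀
    obtain ⟨s, u, hs₂, h1, h2, h3, h4, h5⟩ :=
      IH t₂ u₀ hcard₂ (fun x hx => (Finset.mem_filter.1 hx).2) hsum₂
    exact ⟨s, u, hs₂.trans ht₂sub, h1, h2, h3.trans hvec₂, h4.trans hcost₂, h5⟩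

/-- Carathéodory-type theorem with affinely independent points:
for continuous `g ≥ 0`, every value `g**(ξ)` is approximated within `δ` by a convex
combination `Σ θ_j g(ξ_j)` with `ξ = Σ θ_j ξ_j`, at most `N+1` points, and
`ξ_j − ξ_0` linearly independent. -/
theorem caratheodory_affinely_independent
    (N : ℕ) (g : (Fin N → ℝ) → ℝ) (hg : Continuous g) (hg0 : ∀ μ, 0 ≤ g μ)
    (ξ : Fin N → ℝ) (δ : ℝ) (hδ : 0 < δ) :
    ∃ m : ℕ, m ≤ N ∧
      ∃ (ξs : Fin (m + 1) → (Fin N → ℝ)) (θ : Fin (m + 1) → ℝ),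
        (∀ j, θ j ∈ Set.Ioc (0:ℝ) 1) ∧
        (∑ j, θ j) = 1 ∧
        ξ = ∑ j, θ j • ξs j ∧
        convEnv g ξ ≤ ∑ j, θ j * g (ξs j) ∧
        (∑ j, θ j * g (ξs j)) ≤ convEnv g ξ + δ ∧
        LinearIndependent ℝ (fun j : Fin m => ξs j.succ - ξs 0) := by
  classical
  set G : Set ((Fin N → ℝ) × ℝ) := {p | p.2 = g p.1} with hG
  set K : Set ((Fin N → ℝ) × ℝ) := convexHull ℝ G with hK
  set S : (Fin N → ℝ) → Set ℝ := fun x => {t | (x, t) ∈ K} with hS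
  set q : (Fin N → ℝ) → ℝ := fun x => sInf (S x) with hq
  have hGK : G ⊆ K := subset_convexHull ℝ G
  have hmem : ∀ x : (Fin N → ℝ), g x ∈ S x := fun x => hGK (by simp [hG])
  have hSne : ∀ x : (Fin N → ℝ), (S x).Nonempty := fun x => ⟨g x, hmem x⟩
  have hKpos : ∀ p ∈ K, (0:ℝ) ≤ p.2 := by
    have hsub : K ⊆ {p : (Fin N → ℝ) × ℝ | 0 ≤ p.2} := by
      rw [hK]
      refine convexHull_min (fun p hp => ?_) ?_
      · have : p.2 = g p.1 := hp
        rw [mem_setOf_eq, this]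
        exact hg0 p.1
      · intro p hp p' hp' a b ha hb hab
        have : (a • p + b • p').2 = a * p.2 + b * p'.2 := rfl
        rw [mem_setOf_eq, this]
        exact add_nonneg (mul_nonneg ha hp) (mul_nonneg hb hp')
    exact fun p hp => hsub hp
  have hbdd : ∀ x : (Fin N → ℝ), BddBelow (S x) := fun x => ⟨0, fun t ht => hKpos _ ht⟩
  have hqle : ∀ x : (Fin N → ℝ), q x ≤ g x := fun x => csInf_le (hbdd x) (hmem x)
  have hKcx : Convex ℝ K := convex_convexHull ℝ G
  have hconv : ConvexOn ℝ univ q := by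
    refine ⟨convex_univ, ?_⟩
    intro x _ y _ a b ha hb hab
    refine le_of_forall_pos_le_add fun ε hε => ?_
    obtain ⟨t₁, ht₁, hlt₁⟩ := exists_lt_of_csInf_lt (hSne x) (lt_add_of_pos_right (q x) hε)
    obtain ⟨t₂, ht₂, hlt₂⟩ := exists_lt_of_csInf_lt (hSne y) (lt_add_of_pos_right (q y) hε)
    have hcomb : (a • x + b • y, a * t₁ + b * t₂) ∈ K := by
      have := hKcx ht₁ ht₂ ha hb hab
      have heq : a • ((x, t₁) : (Fin N → ℝ) × ℝ) + b • (y, t₂) = (a • x + b • y, a * t₁ + b * t₂) := by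
        ext <;> simp [smul_eq_mul]
      rwa [heq] at this
    have h1 : q (a • x + b • y) ≤ a * t₁ + b * t₂ := csInf_le (hbdd _) hcomb
    have h2 : a * t₁ ≤ a * (q x + ε) := mul_le_mul_of_nonneg_left hlt₁.le ha
    have h3 : b * t₂ ≤ b * (q y + ε) := mul_le_mul_of_nonneg_left hlt₂.le hb
    have : a * (q x + ε) + b * (q y + ε) = a * q x + b * q y + ε := by
      rw [mul_add, mul_add]
      nlinarith [hab]
    simp only [smul_eq_mul]
    linarith
  have hqc : Continuous q := continuousOn_univ.mp (hconv.continuousOn isOpen_univ)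
  set C : Set ((Fin N → ℝ) × ℝ) := {p | q p.1 ≤ p.2} with hC
  have hCclosed : IsClosed C := isClosed_le (hqc.comp continuous_fst) continuous_snd
  have hCconv : Convex ℝ C := by
    intro p hp p' hp' a b ha hb hab
    have h1 : q (a • p.1 + b • p'.1) ≤ a * q p.1 + b * q p'.1 := by
      have := hconv.2 (mem_univ p.1) (mem_univ p'.1) ha hb hab
      simpa [smul_eq_mul] using this
    have h2 : a * q p.1 + b * q p'.1 ≤ a * p.2 + b * p'.2 :=
      add_le_add (mul_le_mul_of_nonneg_left hp ha) (mul_le_mul_of_nonneg_left hp' hb)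
    show q (a • p + b • p').1 ≤ (a • p + b • p').2
    have hfst : (a • p + b • p').1 = a • p.1 + b • p'.1 := rfl
    have hsnd : (a • p + b • p').2 = a * p.2 + b * p'.2 := rfl
    rw [hfst, hsnd]
    exact h1.trans h2
  set R : Set ℝ := {r : ℝ | ∃ A : (Fin N → ℝ) →ᵃ[ℝ] ℝ, (∀ μ, A μ ≤ g μ) ∧ r = A ξ} with hR
  have hconvEnv : convEnv g ξ = sSup R := rfl
  have hRne : R.Nonempty := ⟨(AffineMap.const ℝ (Fin N → ℝ) (0:ℝ)) ξ, AffineMap.const ℝ (Fin N → ℝ) (0:ℝ),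
    fun μ => by simpa using hg0 μ, rfl⟩
  have hRbdd : BddAbove R := ⟨g ξ, by rintro r ⟨A, hA, rfl⟩; exact hA ξ⟩
  -- convEnv ≤ q
  have hle : convEnv g ξ ≤ q ξ := by
    rw [hconvEnv]
    refine csSup_le hRne ?_
    rintro r ⟨A, hA, rfl⟩
    refine le_csInf (hSne ξ) fun t ht => ?_
    have hsub : K ⊆ {p : (Fin N → ℝ) × ℝ | A p.1 ≤ p.2} := by
      rw [hK]
      refine convexHull_min (fun p hp => ?_) ?_
      · have : p.2 = g p.1 := hp
        rw [mem_setOf_eq, this]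
        exact hA p.1
      · have heq : {p : (Fin N → ℝ) × ℝ | A p.1 ≤ p.2}
            = (A.comp (AffineMap.fst : (Fin N → ℝ) × ℝ →ᵃ[ℝ] (Fin N → ℝ))
                - (AffineMap.snd : (Fin N → ℝ) × ℝ →ᵃ[ℝ] ℝ)) ⁻¹' (Iic 0) := by
          ext p
          simp [sub_nonpos]
        rw [heq]
        exact (convex_Iic (0:ℝ)).affine_preimage _
    exact hsub ht
  -- q ≤ convEnv
  have hge : q ξ ≤ convEnv g ξ := by
    refine le_of_forall_pos_le_add fun ε hε => ?_
    have hp : (ξ, q ξ - ε) ∉ C := fun hmem' =>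
      absurd (show q ξ ≤ q ξ - ε from hmem') (by linarith)
    obtain ⟨f, u, hfp, hfC⟩ := geometric_hahn_banach_point_closed hCconv hCclosed hp
    set Lf : (Fin N → ℝ) →L[ℝ] ℝ := f.comp (ContinuousLinearMap.inl ℝ (Fin N → ℝ) ℝ) with hLf
    have hdecomp : ∀ p : (Fin N → ℝ) × ℝ, f p = Lf p.1 + p.2 * f (0, 1) := by
      intro p
      have hsplit : p = ((p.1, 0) : (Fin N → ℝ) × ℝ) + p.2 • ((0 : (Fin N → ℝ)), (1:ℝ)) := by
        ext <;> simp
      rw [hsplit, map_add, map_smul]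
      simp [hLf, smul_eq_mul]
    set cc : ℝ := f (0, 1) with hcc
    have hmemC : ∀ t : ℝ, q ξ ≤ t → ((ξ, t) : (Fin N → ℝ) × ℝ) ∈ C := fun t ht => ht
    have hcpos : 0 < cc := by
      by_contra hc
      push_neg at hc
      have h1 : u < Lf ξ + q ξ * cc := by
        have := hfC (ξ, q ξ) (hmemC _ le_rfl)
        rwa [hdecomp (ξ, q ξ)] at this
      have h2 : Lf ξ + (q ξ - ε) * cc < u := by
        have := hfp
        rwa [hdecomp (ξ, q ξ - ε)] at this
      nlinarith
    set A : (Fin N → ℝ) →ᵃ[ℝ] ℝ :=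
      { toFun := fun x => (u - Lf x) / cc
        linear := cc⁻¹ • (-(Lf : (Fin N → ℝ) →ₗ[ℝ] ℝ))
        map_vadd' := by
          intro p v
          simp only [vadd_eq_add, map_add, LinearMap.smul_apply, LinearMap.neg_apply,
            ContinuousLinearMap.coe_coe, smul_eq_mul]
          field_simp
          ring } with hA
    have hAapp : ∀ x : (Fin N → ℝ), A x = (u - Lf x) / cc := fun x => rfl
    have hAg : ∀ μ : (Fin N → ℝ), A μ ≤ g μ := by
      intro μ
      have hμC : ((μ, g μ) : (Fin N → ℝ) × ℝ) ∈ C := hqle μ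
      have h1 : u < Lf μ + g μ * cc := by
        have := hfC _ hμC
        rwa [hdecomp (μ, g μ)] at this
      rw [hAapp, div_le_iff₀ hcpos]
      linarith
    have hAξ : q ξ - ε < A ξ := by
      have h2 : Lf ξ + (q ξ - ε) * cc < u := by
        have := hfp
        rwa [hdecomp (ξ, q ξ - ε)] at this
      rw [hAapp, lt_div_iff₀ hcpos]
      linarith
    have hAle : A ξ ≤ convEnv g ξ := by
      rw [hconvEnv]
      exact le_csSup hRbdd ⟨A, hAg, rfl⟩
    linarith
  -- extract a near-optimal convex combination
  obtain ⟨t0, ht0S, ht0lt⟩ := exists_lt_of_csInf_lt (hSne ξ) (lt_add_of_pos_right (q ξ) hδ)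
  have ht0K : ((ξ, t0) : (Fin N → ℝ) × ℝ) ∈ convexHull ℝ G := ht0S
  rw [convexHull_eq] at ht0K
  obtain ⟨ι, T, w, zp, hw0, hw1, hzG, hcm⟩ := ht0K
  rw [Finset.centerMass_eq_of_sum_1 _ _ hw1] at hcm
  have hfst : ∑ i ∈ T, w i • (zp i).1 = ξ := by
    have h := congrArg Prod.fst hcm
    rw [Prod.fst_sum] at h
    simpa using h
  have hsnd : ∑ i ∈ T, w i * g ((zp i).1) = t0 := by
    have h := congrArg Prod.snd hcm
    rw [Prod.snd_sum] at h
    calc ∑ i ∈ T, w i * g ((zp i).1) = ∑ i ∈ T, (w i • zp i).2 :=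
          Finset.sum_congr rfl fun i hi => by rw [Prod.smul_snd, smul_eq_mul, hzG i hi]
      _ = t0 := h
  obtain ⟨s, v, hvpos, hvsum, hvvec, hvcost⟩ := merge_to_finset g T w (fun i => (zp i).1) hw0
  rw [hw1] at hvsum
  rw [hfst] at hvvec
  rw [hsnd] at hvcost
  obtain ⟨s', u', hs'sub, hupos, husum, huvec, hucost, hAI⟩ :=
    reduce_aff_indep g s.card s v le_rfl hvpos hvsum
  rw [hvvec] at huvec
  rw [hvcost] at hucost
  have hucost' : ∑ x ∈ s', u' x * g x < q ξ + δ := lt_of_le_of_lt hucost ht0lt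
  have hmemK : ((ξ, ∑ x ∈ s', u' x * g x) : (Fin N → ℝ) × ℝ) ∈ K := by
    have hsum' : ∑ x ∈ s', u' x • ((x, g x) : (Fin N → ℝ) × ℝ) = (ξ, ∑ x ∈ s', u' x * g x) := by
      rw [Prod.ext_iff]
      constructor
      · rw [Prod.fst_sum]
        simp only [Prod.smul_fst]
        exact huvec
      · rw [Prod.snd_sum]
        simp only [Prod.smul_snd, smul_eq_mul]
    rw [← hsum', hK]
    exact (convex_convexHull ℝ G).sum_mem (fun x hx => (hupos x hx).le) husum
      (fun x hx => subset_convexHull ℝ G (by simp [hG]))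
  have hlow : q ξ ≤ ∑ x ∈ s', u' x * g x := csInf_le (hbdd ξ) hmemK
  -- packaging
  have hs'ne : s'.Nonempty := by
    rcases Finset.eq_empty_or_nonempty s' with h | h
    · rw [h] at husum
      simp at husum
    · exact h
  set m := s'.card - 1 with hm
  have hcard' : s'.card = m + 1 := by
    have := Finset.card_pos.2 hs'ne
    omega
  let e : Fin (m + 1) ≃ { x // x ∈ s' } := (finCongr hcard'.symm).trans s'.equivFin.symm
  set ξs : Fin (m + 1) → (Fin N → ℝ) := fun j => ((e j : { x // x ∈ s' }) : (Fin N → ℝ)) with hξs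
  set θ : Fin (m + 1) → ℝ := fun j => u' (ξs j) with hθ
  have hθsum : ∑ j, θ j = 1 := by
    rw [show ∑ j, θ j = ∑ x ∈ s', u' x from ?_]
    · exact husum
    · rw [← Finset.sum_coe_sort s' u']
      exact Equiv.sum_comp e fun i => u' ↑i
  have hθvec : ∑ j, θ j • ξs j = ξ := by
    rw [show ∑ j, θ j • ξs j = ∑ x ∈ s', u' x • x from ?_]
    · exact huvec
    · rw [← Finset.sum_coe_sort s' (fun x => u' x • x)]
      exact Equiv.sum_comp e fun i => u' ↑i • (↑i : Fin N → ℝ)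
  have hθcost : ∑ j, θ j * g (ξs j) = ∑ x ∈ s', u' x * g x := by
    rw [← Finset.sum_coe_sort s' (fun x => u' x * g x)]
    exact Equiv.sum_comp e fun i => u' ↑i * g ↑i
  have hAI2 : AffineIndependent ℝ ξs := hAI.comp_embedding e.toEmbedding
  have hLI : LinearIndependent ℝ (fun j : Fin m => ξs j.succ - ξs 0) := by
    have h := (affineIndependent_iff_linearIndependent_vsub ℝ ξs 0).mp hAI2
    let emb : Fin m ↪ {x : Fin (m + 1) // x ≠ 0} :=
      ⟨fun j => ⟨j.succ, Fin.succ_ne_zero j⟩, fun a b hab => by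
        simpa [Fin.succ_inj] using hab⟩
    have h2 := h.comp emb emb.injective
    have heq : ((fun i : {x : Fin (m + 1) // x ≠ 0} => ξs ↑i -ᵥ ξs 0) ∘ emb)
        = fun j : Fin m => ξs j.succ - ξs 0 := by
      funext j
      simp [emb, vsub_eq_sub]; rfl
    rwa [heq] at h2
  have hmN : m ≤ N := by
    have h := hLI.fintype_card_le_finrank
    simpa [Module.finrank_fin_fun] using h
  refine ⟨m, hmN, ξs, θ, ?_, hθsum, hθvec.symm, ?_, ?_, hLI⟩
  · intro j
    constructor
    · exact hupos _ (e j).2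
    · have hnn : ∀ i ∈ Finset.univ, 0 ≤ θ i := fun i _ => (hupos _ (e i).2).le
      have h := Finset.single_le_sum hnn (Finset.mem_univ j)
      rwa [hθsum] at h
  · rw [hθcost]
    linarith
  · rw [hθcost]
    linarith
end

section
/- Let g: ℝ^N → [0,∞) be continuous and suppose there exist constants p > 1, C > 0 with (1/C)|μ|^p − C ≤ g(μ) ≤ C|μ|^p + C for all μ ∈ ℝ^N. Then for every ξ ∈ ℝ^N there exist m ≤ N, points ξ_0,…,ξ_m and weights θ_j ∈ (0,1] with Σθ_j = 1, ξ = Σθ_j ξ_j, g**(ξ) = Σ_j θ_j g(ξ_j), the vectors ξ_j − ξ_0 (j ≥ 1) linearly independent, and moreover |ξ_j| ≤ K(|ξ| + 1) for all j, where K depends only on p and C. -/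
open Set

namespace CaraAux


variable {N : ℕ}

def dot (b x : Fin N → ℝ) : ℝ := ∑ i, b i * x i

lemma dot_add_left (b c x : Fin N → ℝ) : dot (b + c) x = dot b x + dot c x := by
  simp [dot, add_mul, Finset.sum_add_distrib]

lemma dot_smul_left (η : ℝ) (b x : Fin N → ℝ) : dot (η • b) x = η * dot b x := by
  simp [dot, Finset.mul_sum, mul_assoc]

lemma dot_add_right (b x y : Fin N → ℝ) : dot b (x + y) = dot b x + dot b y := by
  simp [dot, mul_add, Finset.sum_add_distrib]

lemma dot_smul_right (b : Fin N → ℝ) (c : ℝ) (x : Fin N → ℝ) :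
    dot b (c • x) = c * dot b x := by
  simp only [dot, Pi.smul_apply, smul_eq_mul, Finset.mul_sum]
  exact Finset.sum_congr rfl fun i _ => by ring

lemma dot_sum_right {n : ℕ} (b : Fin N → ℝ) (θ : Fin n → ℝ) (x : Fin n → (Fin N → ℝ)) :
    dot b (∑ j, θ j • x j) = ∑ j, θ j * dot b (x j) := by
  simp only [dot, Finset.sum_apply, Pi.smul_apply, smul_eq_mul, Finset.mul_sum]
  rw [Finset.sum_comm]
  exact Finset.sum_congr rfl fun j _ => Finset.sum_congr rfl fun i _ => by ring

lemma abs_dot_le (b x : Fin N → ℝ) : |dot b x| ≤ (∑ i, |b i|) * ‖x‖ := by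
  calc |dot b x| ≤ ∑ i, |b i * x i| := Finset.abs_sum_le_sum_abs _ _
    _ ≤ ∑ i, |b i| * ‖x‖ := by
        refine Finset.sum_le_sum fun i _ => ?_
        rw [abs_mul]
        exact mul_le_mul_of_nonneg_left (norm_le_pi_norm x i) (abs_nonneg _)
    _ = (∑ i, |b i|) * ‖x‖ := by rw [Finset.sum_mul]


lemma exists_pair_of_affine (A : (Fin N → ℝ) →ᵃ[ℝ] ℝ) : ∃ b t, ∀ x, A x = dot b x + t := by
  refine ⟨fun i => A.linear (fun j => if i = j then 1 else 0), A 0, fun x => ?_⟩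
  have h1 : A x = A.linear x + A 0 := by
    conv_lhs => rw [AffineMap.decomp A]
    rfl
  rw [h1, LinearMap.pi_apply_eq_sum_univ A.linear x]
  simp only [dot, smul_eq_mul]
  congr 1
  exact Finset.sum_congr rfl fun i _ => by ring

lemma affine_of_pair (b : Fin N → ℝ) (t : ℝ) :
    ∃ A : (Fin N → ℝ) →ᵃ[ℝ] ℝ, ∀ x, A x = dot b x + t := by
  refine ⟨(∑ i, b i • (LinearMap.proj i : (Fin N → ℝ) →ₗ[ℝ] ℝ)).toAffineMap
    + AffineMap.const ℝ (Fin N → ℝ) t, fun x => ?_⟩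
  simp [dot, LinearMap.sum_apply]

lemma convEnv_eq (g : (Fin N → ℝ) → ℝ) (ξ : Fin N → ℝ) :
    convEnv g ξ = sSup {r : ℝ | ∃ q : (Fin N → ℝ) × ℝ,
      (∀ μ, dot q.1 μ + q.2 ≤ g μ) ∧ r = dot q.1 ξ + q.2} := by
  unfold convEnv
  congr 1
  ext r
  constructor
  · rintro ⟨A, hA, rfl⟩
    obtain ⟨b, t, hbt⟩ := exists_pair_of_affine A
    exact ⟨(b, t), fun μ => (hbt μ) ▸ hA μ, hbt ξ⟩
  · rintro ⟨⟨b, t⟩, hbt, rfl⟩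
    obtain ⟨A, hA⟩ := affine_of_pair b t
    exact ⟨A, fun μ => (hA μ).le.trans (hbt μ), (hA ξ).symm⟩


lemma rpow_cancel {y q : ℝ} (hy : 0 ≤ y) (hq : q ≠ 0) : (y ^ (1/q)) ^ q = y := by
  rw [← Real.rpow_mul hy, one_div, inv_mul_cancel₀ hq, Real.rpow_one]

lemma coercive_bound (p C M : ℝ) (hp : 1 < p) (hC : 0 < C) (hM : 1 ≤ M) :
    ∃ ρ : ℝ, 1 ≤ ρ ∧ ∀ x : ℝ, 0 ≤ x → ρ ≤ x → C + 2*M*(x+1) ≤ (1/C) * x ^ p := by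
  have hp1 : (0:ℝ) < p - 1 := by linarith
  have hCM : (0:ℝ) ≤ C * (C + 4*M) := by positivity
  refine ⟨max 1 ((C*(C+4*M)) ^ (1/(p-1))), le_max_left _ _, fun x hx0 hρx => ?_⟩
  have hx1 : (1:ℝ) ≤ x := le_trans (le_max_left _ _) hρx
  have hxpos : (0:ℝ) < x := by linarith
  have h1 : C*(C+4*M) ≤ x ^ (p-1) := by
    calc C*(C+4*M) = ((C*(C+4*M)) ^ (1/(p-1))) ^ (p-1) := (rpow_cancel hCM hp1.ne').symm
      _ ≤ x ^ (p-1) := Real.rpow_le_rpow (Real.rpow_nonneg hCM _)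
          (le_trans (le_max_right _ _) hρx) hp1.le
  have h2 : x ^ p = x ^ (p-1) * x := by
    rw [← Real.rpow_add_one hxpos.ne' (p-1)]; ring_nf
  have h3 : C*(C+4*M)*x ≤ x ^ p := by
    rw [h2]; exact mul_le_mul_of_nonneg_right h1 hx0
  have h4 : (1/C) * (C*(C+4*M)*x) ≤ (1/C) * x ^ p :=
    mul_le_mul_of_nonneg_left h3 (by positivity)
  have h5 : (1/C) * (C*(C+4*M)*x) = (C+4*M)*x := by
    field_simp
  nlinarith [h4, h5, hx1, hM, hC]

lemma normBound (p C : ℝ) (hp : 1 < p) (hC : 0 < C) {a t : ℝ} (ha : 1 ≤ a) (ht : 0 ≤ t)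
    (h : t ^ p ≤ (C^2*(2^p+4)) * a ^ p + (C^2*(2^p+4)) * a ^ (p-1) * t) :
    t ≤ (max 1 ((2*(C^2*(2^p+4))) ^ (1/(p-1)))) * a := by
  set D : ℝ := C^2*(2^p+4) with hD
  have hDpos : 0 < D := by
    have : (0:ℝ) < 2 ^ p := Real.rpow_pos_of_pos (by norm_num) _
    positivity
  set K : ℝ := max 1 ((2*D) ^ (1/(p-1))) with hK
  have hp1 : (0:ℝ) < p - 1 := by linarith
  have hK1 : (1:ℝ) ≤ K := le_max_left _ _
  by_contra hcon
  push_neg at hcon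
  have hapos : (0:ℝ) < a := by linarith
  have hta : a < t := by
    have : a ≤ K * a := le_mul_of_one_le_left hapos.le hK1
    linarith [lt_of_le_of_lt this hcon]
  have htpos : (0:ℝ) < t := lt_trans hapos hta
  have hap : a ^ p ≤ a ^ (p-1) * t := by
    have : a ^ p = a ^ (p-1) * a := by
      rw [← Real.rpow_add_one hapos.ne' (p-1)]; ring_nf
    rw [this]
    exact mul_le_mul_of_nonneg_left hta.le (Real.rpow_nonneg hapos.le _)
  have h6 : t ^ p ≤ 2*D * a ^ (p-1) * t := by nlinarith [hap]
  have hexp : t ^ p = t ^ (p-1) * t := by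
    rw [← Real.rpow_add_one htpos.ne' (p-1)]; ring_nf
  have h8 : t ^ (p-1) ≤ 2*D*a^(p-1) := by
    rw [hexp] at h6
    exact le_of_mul_le_mul_right (by linarith) htpos
  have h9 : (t/a) ^ (p-1) ≤ 2*D := by
    rw [Real.div_rpow ht hapos.le]
    rw [div_le_iff₀ (Real.rpow_pos_of_pos hapos _)]
    linarith [h8]
  have h10 : t/a ≤ (2*D) ^ (1/(p-1)) := by
    calc t/a = ((t/a) ^ (p-1)) ^ (1/(p-1)) := by
          rw [← Real.rpow_mul (by positivity)]
          rw [mul_one_div, div_self hp1.ne', Real.rpow_one]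
      _ ≤ (2*D) ^ (1/(p-1)) := Real.rpow_le_rpow (Real.rpow_nonneg (by positivity) _) h9 (by positivity)
  have : t/a ≤ K := h10.trans (le_max_right _ _)
  rw [div_le_iff₀ hapos] at this
  exact absurd this (not_le.mpr (by linarith [hcon]))

lemma isCompact_convexHull_fin {Z : Set (Fin N → ℝ)} (hZ : IsCompact Z) :
    IsCompact (convexHull ℝ Z) := by
  rcases Z.eq_empty_or_nonempty with rfl | ⟨z₀, hz₀⟩
  · simp
  · set f : ((Fin (N+1) → ℝ) × (Fin (N+1) → (Fin N → ℝ))) → (Fin N → ℝ) :=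
      fun q => ∑ i, q.1 i • q.2 i with hf
    have hcont : Continuous f := by
      apply continuous_finset_sum
      intro i _
      exact ((continuous_apply i).comp continuous_fst).smul
        ((continuous_apply i).comp continuous_snd)
    have hcomp : IsCompact ((stdSimplex ℝ (Fin (N+1))) ×ˢ (Set.pi univ fun _ : Fin (N+1) => Z)) :=
      (isCompact_stdSimplex ℝ _).prod (isCompact_univ_pi fun _ => hZ)
    have himg : f '' ((stdSimplex ℝ (Fin (N+1))) ×ˢ (Set.pi univ fun _ : Fin (N+1) => Z))
        = convexHull ℝ Z := by
      apply Subset.antisymm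
      · rintro - ⟨⟨w, zf⟩, ⟨⟨hw0, hw1⟩, hzf⟩, rfl⟩
        exact Convex.sum_mem (convex_convexHull ℝ Z) (fun i _ => hw0 i) hw1
          (fun i _ => subset_convexHull ℝ Z (hzf i (mem_univ i)))
      · intro x hx
        obtain ⟨ι, hfin, z, w, hrange, haff, hpos, hsum1, hsumx⟩ :=
          eq_pos_convex_span_of_mem_convexHull hx
        have hcard : Fintype.card ι ≤ N + 1 := by
          have h1 := haff.card_le_finrank_succ
          have h2 : Module.finrank ℝ (vectorSpan ℝ (Set.range z)) ≤ Module.finrank ℝ (Fin N → ℝ) :=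
            Submodule.finrank_le _
          have h3 : Module.finrank ℝ (Fin N → ℝ) = N := by
            simp [Module.finrank_pi]
          omega
        obtain ⟨e⟩ : Nonempty (ι ↪ Fin (N+1)) := by
          apply Function.Embedding.nonempty_of_card_le
          simpa using hcard
        set w' : Fin (N+1) → ℝ := Function.extend e w 0 with hw'
        set z' : Fin (N+1) → (Fin N → ℝ) := Function.extend e z (fun _ => z₀) with hz'
        have hinj : Function.Injective e := e.injective
        have hwe : ∀ i, w' (e i) = w i := fun i => hinj.extend_apply w 0 i
        have hze : ∀ i, z' (e i) = z i := fun i => hinj.extend_apply z _ i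
        have hoff : ∀ j, j ∉ Finset.image e Finset.univ → w' j = 0 := by
          intro j hj
          rw [hw', Function.extend_apply']
          · rfl
          · rintro ⟨i, rfl⟩
            exact hj (Finset.mem_image_of_mem e (Finset.mem_univ i))
        have hsw : ∑ j, w' j = ∑ i, w i := by
          calc ∑ j : Fin (N+1), w' j = ∑ j ∈ Finset.image e Finset.univ, w' j :=
                (Finset.sum_subset (Finset.subset_univ _) (fun j _ hj => hoff j hj)).symm
            _ = ∑ i, w' (e i) := Finset.sum_image (fun i _ j _ h => hinj h)
            _ = ∑ i, w i := Finset.sum_congr rfl fun i _ => hwe i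
        have hsz : ∑ j, w' j • z' j = ∑ i, w i • z i := by
          calc ∑ j : Fin (N+1), w' j • z' j
              = ∑ j ∈ Finset.image e Finset.univ, w' j • z' j :=
                (Finset.sum_subset (Finset.subset_univ _)
                  (fun j _ hj => by rw [hoff j hj, zero_smul])).symm
            _ = ∑ i, w' (e i) • z' (e i) := Finset.sum_image (fun i _ j _ h => hinj h)
            _ = ∑ i, w i • z i := Finset.sum_congr rfl fun i _ => by rw [hwe, hze]
        refine ⟨(w', z'), ⟨⟨?_, ?_⟩, ?_⟩, ?_⟩
        · intro j
          show 0 ≤ w' j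
          by_cases hj : ∃ i, e i = j
          · obtain ⟨i, rfl⟩ := hj
            rw [hwe]; exact (hpos i).le
          · rw [hw', Function.extend_apply' _ _ _ hj]; exact le_rfl
        · show ∑ j, w' j = 1
          rw [hsw, hsum1]
        · intro j _
          show z' j ∈ Z
          by_cases hj : ∃ i, e i = j
          · obtain ⟨i, rfl⟩ := hj
            rw [hze]; exact hrange (mem_range_self i)
          · rw [hz', Function.extend_apply' _ _ _ hj]; exact hz₀
        · show ∑ j, w' j • z' j = x
          rw [hsz, hsumx]
    rw [← himg]
    exact hcomp.image hcont
lemma dot_continuous (b : Fin N → ℝ) : Continuous fun x : Fin N → ℝ => dot b x := by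
  unfold dot
  exact continuous_finset_sum _ fun i _ => continuous_const.mul (continuous_apply i)

lemma dot_pair_continuous (μ : Fin N → ℝ) :
    Continuous fun q : (Fin N → ℝ) × ℝ => dot q.1 μ + q.2 := by
  unfold dot
  exact (continuous_finset_sum _ fun i _ =>
    ((continuous_apply i).comp continuous_fst).mul continuous_const).add continuous_snd

lemma dot_single (b : Fin N → ℝ) (i : Fin N) : dot b (Pi.single i 1) = b i := by
  simp [dot, Pi.single_apply, mul_ite]

lemma dot_neg_right (b x : Fin N → ℝ) : dot b (-x) = - dot b x := by
  simp [dot, mul_neg, Finset.sum_neg_distrib]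

lemma norm_single_le (i : Fin N) : ‖(Pi.single i 1 : Fin N → ℝ)‖ ≤ 1 := by
  rw [pi_norm_le_iff_of_nonneg zero_le_one]
  intro j
  rw [Pi.single_apply]
  split <;> simp

lemma slope_bound (p C : ℝ) (hp : 1 < p) (hC : 0 < C) (g : (Fin N → ℝ) → ℝ)
    (hg2 : ∀ μ, g μ ≤ C * ‖μ‖ ^ p + C) (ξ b : Fin N → ℝ) (t : ℝ)
    (hbt : ∀ μ, dot b μ + t ≤ g μ) (hval : 0 ≤ dot b ξ + t) :
    ∀ v : Fin N → ℝ, dot b v ≤ ((C * (2*(‖ξ‖+1)) ^ p + C) / (‖ξ‖+1)) * ‖v‖ := by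
  set a : ℝ := ‖ξ‖ + 1 with ha
  have ha1 : 1 ≤ a := by have := norm_nonneg ξ; linarith [ha]
  have ha0 : 0 < a := by linarith
  set X : ℝ := C * (2*a) ^ p + C with hX
  have hXnn : 0 ≤ X := by
    have : (0:ℝ) ≤ (2*a) ^ p := Real.rpow_nonneg (by linarith) _
    positivity
  intro v
  rcases eq_or_ne v 0 with rfl | hv
  · simp [dot]
  · have hvn : 0 < ‖v‖ := norm_pos_iff.mpr hv
    set c : ℝ := a / ‖v‖ with hc
    have hc0 : 0 < c := by positivity
    have hnw : ‖c • v‖ = a := by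
      rw [norm_smul, Real.norm_eq_abs, abs_of_pos hc0, hc, div_mul_cancel₀ _ hvn.ne']
    have h1 : dot b (ξ + c • v) + t ≤ C * ‖ξ + c • v‖ ^ p + C := le_trans (hbt _) (hg2 _)
    have h2 : ‖ξ + c • v‖ ≤ 2 * a := by
      calc ‖ξ + c • v‖ ≤ ‖ξ‖ + ‖c • v‖ := norm_add_le _ _
        _ = ‖ξ‖ + a := by rw [hnw]
        _ ≤ 2 * a := by have := norm_nonneg ξ; linarith [ha]
    have h3 : C * ‖ξ + c • v‖ ^ p ≤ C * (2*a) ^ p :=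
      mul_le_mul_of_nonneg_left (Real.rpow_le_rpow (norm_nonneg _) h2 (by linarith)) hC.le
    have h4 : dot b (ξ + c • v) = dot b ξ + c * dot b v := by
      rw [dot_add_right, dot_smul_right]
    have h5 : c * dot b v ≤ X := by rw [h4] at h1; linarith
    have h6 : dot b v ≤ X / c := (le_div_iff₀ hc0).mpr (by linarith)
    calc dot b v ≤ X / c := h6
      _ = (X / a) * ‖v‖ := by rw [hc]; field_simp
      _ = ((C * (2*(‖ξ‖+1)) ^ p + C) / (‖ξ‖+1)) * ‖v‖ := by rw [← ha, ← hX]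

lemma touch_arith (p C a X B e1 e2 : ℝ) (hC : 0 < C) (ha1 : 1 ≤ a) (hXnn : 0 ≤ X)
    (ha0 : 0 < a) (hB : B = (C * (2*a) ^ p + C) / a)
    (hea : (2*a) ^ p = e1 * a ^ p) (he1 : e1 = 2 ^ p)
    (heaa : a ^ (p-1) * a = a ^ p) (he2 : e2 = a ^ (p-1))
    (hap1 : 1 ≤ a ^ p) (hap11 : 1 ≤ e2)
    (h7 : (1/C) * X ^ p ≤ C * a ^ p + 2*C + B*(X+a)) :
    X ^ p ≤ (C^2*(2^p+4)) * a ^ p + (C^2*(2^p+4)) * a ^ (p-1) * X := by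
  have hBnn : 0 ≤ B := by
    rw [hB]
    have : (0:ℝ) ≤ (2*a) ^ p := by rw [hea, he1]; positivity
    positivity
  have he1pos : 0 < e1 := by rw [he1]; positivity
  have he2nn : (0:ℝ) ≤ e2 := by linarith
  have hB2 : B ≤ C*(e1+1)*e2 := by
    rw [hB, div_le_iff₀ ha0, hea, he2]
    have hassoc : C*(e1+1)*a^(p-1)*a = C*(e1+1)*a^p := by rw [mul_assoc, heaa]
    rw [hassoc]
    have hc : C*1 ≤ C*a^p := mul_le_mul_of_nonneg_left hap1 hC.le
    nlinarith [hc]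
  have k1 : B*(X+a) ≤ C*(e1+1)*e2*(X+a) := mul_le_mul_of_nonneg_right hB2 (by linarith)
  have k3 : C*((1/C) * X ^ p) ≤ C*(C * a ^ p + 2*C + B*(X+a)) :=
    mul_le_mul_of_nonneg_left h7 hC.le
  have k2 : C*((1/C) * X ^ p) = X ^ p := by field_simp
  have h8 : X ^ p ≤ C^2*a^p + 2*C^2 + C*(B*(X+a)) := by
    rw [k2] at k3; nlinarith [k3]
  have k4 : C*(B*(X+a)) ≤ C*(C*(e1+1)*e2*(X+a)) := mul_le_mul_of_nonneg_left k1 hC.le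
  have k5 : C*(C*(e1+1)*e2*(X+a)) = C^2*(e1+1)*(e2*X) + C^2*(e1+1)*(e2*a) := by ring
  have k5' : e2 * a = a ^ p := by rw [he2, heaa]
  have k6 : C^2*1 ≤ C^2*(a^p) := mul_le_mul_of_nonneg_left hap1 (sq_nonneg C)
  have k7 : 0 ≤ C^2*(e2*X) := mul_nonneg (sq_nonneg C) (mul_nonneg he2nn hXnn)
  rw [k5'] at k5
  rw [← he1, ← he2]
  nlinarith [h8, k4, k5, k6, k7, sq_nonneg C, mul_nonneg (mul_nonneg (sq_nonneg C) he2nn) hXnn]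

lemma touch_bound {N : ℕ} (p C : ℝ) (hp : 1 < p) (hC : 0 < C) (g : (Fin N → ℝ) → ℝ)
    (hg : ∀ μ : Fin N → ℝ, (1/C) * ‖μ‖ ^ p - C ≤ g μ ∧ g μ ≤ C * ‖μ‖ ^ p + C)
    (ξ bA : Fin N → ℝ) (tA : ℝ)
    (hbt : ∀ μ, dot bA μ + tA ≤ g μ) (hval : 0 ≤ dot bA ξ + tA) :
    ∀ x : Fin N → ℝ, g x = dot bA x + tA →
      ‖x‖ ≤ (max 1 ((2*(C^2*((2:ℝ)^p+4))) ^ (1/(p-1)))) * (‖ξ‖+1) := by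
  intro x hx
  have hξnn : (0:ℝ) ≤ ‖ξ‖ := norm_nonneg ξ
  have ha1 : (1:ℝ) ≤ ‖ξ‖ + 1 := by linarith
  have ha0 : (0:ℝ) < ‖ξ‖ + 1 := by linarith
  have hp0 : (0:ℝ) ≤ p := by linarith
  have hp10 : (0:ℝ) ≤ p - 1 := by linarith
  have hBv := slope_bound p C hp hC g (fun μ => (hg μ).2) ξ bA tA hbt hval
  have hxnn : (0:ℝ) ≤ ‖x‖ := norm_nonneg x
  have h1 : (1/C) * ‖x‖ ^ p - C ≤ g x := (hg x).1
  have hsplit : ξ + (x - ξ) = x := by abel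
  have h2 : dot bA x = dot bA ξ + dot bA (x - ξ) := by rw [← dot_add_right, hsplit]
  have h3 := hBv (x - ξ)
  have h4 : ‖x - ξ‖ ≤ ‖x‖ + (‖ξ‖+1) := by have := norm_sub_le x ξ; linarith
  have h5 : dot bA ξ + tA ≤ C*(‖ξ‖+1) ^ p + C := by
    refine le_trans (hbt ξ) (le_trans (hg ξ).2 ?_)
    have h5a : ‖ξ‖ ^ p ≤ (‖ξ‖+1) ^ p := Real.rpow_le_rpow (norm_nonneg _) (by linarith) hp0
    nlinarith [hC.le]
  have hBnn : 0 ≤ (C * (2*(‖ξ‖+1)) ^ p + C) / (‖ξ‖+1) := by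
    have : (0:ℝ) ≤ (2*(‖ξ‖+1)) ^ p := Real.rpow_nonneg (by linarith) _
    positivity
  have h6 : (C * (2*(‖ξ‖+1)) ^ p + C) / (‖ξ‖+1) * ‖x - ξ‖
      ≤ (C * (2*(‖ξ‖+1)) ^ p + C) / (‖ξ‖+1) * (‖x‖ + (‖ξ‖+1)) :=
    mul_le_mul_of_nonneg_left h4 hBnn
  have h7 : (1/C) * ‖x‖ ^ p ≤ C*(‖ξ‖+1) ^ p + 2*C
      + ((C * (2*(‖ξ‖+1)) ^ p + C) / (‖ξ‖+1))*(‖x‖+(‖ξ‖+1)) := by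
    have hgu : g x ≤ C*(‖ξ‖+1) ^ p + C
        + ((C * (2*(‖ξ‖+1)) ^ p + C) / (‖ξ‖+1))*(‖x‖+(‖ξ‖+1)) := by
      rw [hx, h2]; linarith
    linarith
  have hfinal := touch_arith p C (‖ξ‖+1) ‖x‖ ((C * (2*(‖ξ‖+1)) ^ p + C) / (‖ξ‖+1))
    ((2:ℝ)^p) ((‖ξ‖+1)^(p-1)) hC ha1 hxnn ha0 rfl
    (Real.mul_rpow (by norm_num) ha0.le) rfl
    (by rw [← Real.rpow_add_one ha0.ne' (p-1)]; ring_nf) rfl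
    (Real.one_le_rpow ha1 hp0) (Real.one_le_rpow ha1 hp10) h7
  exact normBound p C hp hC ha1 hxnn hfinal

end CaraAux

open CaraAux in
/-- under two-sided `p`-growth, the Carathéodory representation of the
convex envelope is exact (`δ = 0`) and the points are bounded by `K(|ξ|+1)` with `K`
depending only on `p` and `C`. -/
theorem caratheodory_exact_with_bound
    (p C : ℝ) (hp : 1 < p) (hC : 0 < C) :
    ∃ K : ℝ, 0 < K ∧
      ∀ (N : ℕ) (g : (Fin N → ℝ) → ℝ), Continuous g → (∀ μ, 0 ≤ g μ) →
        (∀ μ : Fin N → ℝ, (1 / C) * ‖μ‖ ^ p - C ≤ g μ ∧ g μ ≤ C * ‖μ‖ ^ p + C) →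
        ∀ ξ : Fin N → ℝ,
          ∃ m : ℕ, m ≤ N ∧
            ∃ (ξs : Fin (m + 1) → (Fin N → ℝ)) (θ : Fin (m + 1) → ℝ),
              (∀ j, θ j ∈ Set.Ioc (0:ℝ) 1) ∧
              (∑ j, θ j) = 1 ∧
              ξ = ∑ j, θ j • ξs j ∧
              convEnv g ξ = ∑ j, θ j * g (ξs j) ∧
              LinearIndependent ℝ (fun j : Fin m => ξs j.succ - ξs 0) ∧
              ∀ j, ‖ξs j‖ ≤ K * (‖ξ‖ + 1) := by
  refine ⟨max 1 ((2*(C^2*((2:ℝ)^p+4))) ^ (1/(p-1))), lt_of_lt_of_le one_pos (le_max_left _ _), ?_⟩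
  intro N g hgcont hg0 hgrowth ξ
  -- the sup set in pair form
  set S : Set ℝ := {r : ℝ | ∃ q : (Fin N → ℝ) × ℝ,
      (∀ μ, dot q.1 μ + q.2 ≤ g μ) ∧ r = dot q.1 ξ + q.2} with hS
  have hconv : convEnv g ξ = sSup S := convEnv_eq g ξ
  have hdot0 : ∀ μ : Fin N → ℝ, dot (0 : Fin N → ℝ) μ = 0 := by intro μ; simp [dot]
  have h0S : (0:ℝ) ∈ S := ⟨(0, 0), fun μ => by rw [hdot0]; simpa using hg0 μ, by rw [hdot0]; simp⟩
  have hbdd : BddAbove S := ⟨g ξ, by rintro r ⟨q, hq, rfl⟩; exact hq ξ⟩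
  have hsup0 : 0 ≤ sSup S := le_csSup hbdd h0S
  -- compact set of candidate supporting pairs
  set F : ((Fin N → ℝ) × ℝ) → ℝ := fun q => dot q.1 ξ + q.2 with hF
  set K₀ : Set ((Fin N → ℝ) × ℝ) := {q | (∀ μ, dot q.1 μ + q.2 ≤ g μ) ∧ 0 ≤ dot q.1 ξ + q.2}
    with hK₀
  have hK₀ne : ((0 : Fin N → ℝ), (0:ℝ)) ∈ K₀ :=
    ⟨fun μ => by rw [hdot0]; simpa using hg0 μ, by rw [hdot0]; simp⟩
  have hK₀closed : IsClosed K₀ := by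
    have : K₀ = (⋂ μ : Fin N → ℝ, {q : (Fin N → ℝ) × ℝ | dot q.1 μ + q.2 ≤ g μ})
        ∩ {q : (Fin N → ℝ) × ℝ | 0 ≤ dot q.1 ξ + q.2} := by
      ext q; simp [hK₀, Set.mem_iInter]
    rw [this]
    exact (isClosed_iInter fun μ =>
        isClosed_le (dot_pair_continuous μ) continuous_const).inter
      (isClosed_le continuous_const (dot_pair_continuous ξ))
  have hK₀bdd : Bornology.IsBounded K₀ := by
    rw [isBounded_iff_forall_norm_le]
    refine ⟨(C * (2*(‖ξ‖+1)) ^ p + C) / (‖ξ‖+1)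
      + (C + ((C * (2*(‖ξ‖+1)) ^ p + C) / (‖ξ‖+1)) * ‖ξ‖), ?_⟩
    rintro ⟨b, t⟩ ⟨hbt, hval⟩
    have hBv := slope_bound p C hp hC g (fun μ => (hgrowth μ).2) ξ b t hbt hval
    have hξnn : (0:ℝ) ≤ ‖ξ‖ := norm_nonneg ξ
    have hBnn : 0 ≤ (C * (2*(‖ξ‖+1)) ^ p + C) / (‖ξ‖+1) := by
      have : (0:ℝ) ≤ (2*(‖ξ‖+1)) ^ p := Real.rpow_nonneg (by linarith) _
      positivity
    have hb : ‖b‖ ≤ (C * (2*(‖ξ‖+1)) ^ p + C) / (‖ξ‖+1) := by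
      rw [pi_norm_le_iff_of_nonneg hBnn]
      intro i
      have h1 := hBv (Pi.single i 1)
      have h2 := hBv (-(Pi.single i 1))
      rw [dot_single] at h1
      rw [dot_neg_right, dot_single, norm_neg] at h2
      have h3 : ((C * (2*(‖ξ‖+1)) ^ p + C) / (‖ξ‖+1)) * ‖(Pi.single i 1 : Fin N → ℝ)‖
          ≤ ((C * (2*(‖ξ‖+1)) ^ p + C) / (‖ξ‖+1)) * 1 :=
        mul_le_mul_of_nonneg_left (norm_single_le i) hBnn
      rw [Real.norm_eq_abs, abs_le]
      constructor <;> linarith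
    have hξb : dot b ξ ≤ ((C * (2*(‖ξ‖+1)) ^ p + C) / (‖ξ‖+1)) * ‖ξ‖ := hBv ξ
    have ht1 : t ≤ C := by
      have h1 := hbt 0
      have h2 : dot b (0 : Fin N → ℝ) = 0 := by simp [dot]
      have h3 := (hgrowth 0).2
      have h4 : ‖(0 : Fin N → ℝ)‖ ^ p = 0 := by
        rw [norm_zero, Real.zero_rpow (by linarith : p ≠ 0)]
      rw [h4] at h3
      rw [h2] at h1
      linarith
    have hBξnn : 0 ≤ ((C * (2*(‖ξ‖+1)) ^ p + C) / (‖ξ‖+1)) * ‖ξ‖ := mul_nonneg hBnn hξnn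
    rw [Prod.norm_def]
    apply max_le
    · simp only
      linarith [hb]
    · simp only [Real.norm_eq_abs]
      rw [abs_le]
      constructor <;> linarith
  have hK₀cpt : IsCompact K₀ := Metric.isCompact_of_isClosed_isBounded hK₀closed hK₀bdd
  obtain ⟨qs, hqsK, hqsmax⟩ := hK₀cpt.exists_isMaxOn ⟨_, hK₀ne⟩ (dot_pair_continuous ξ).continuousOn
  obtain ⟨hAle, hA0⟩ := hqsK
  -- the supporting affine function attains the sup
  have hAval : dot qs.1 ξ + qs.2 = sSup S := by
    refine le_antisymm (le_csSup hbdd ⟨qs, hAle, rfl⟩) (csSup_le ⟨0, h0S⟩ ?_)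
    rintro r ⟨q, hq, rfl⟩
    rcases le_or_gt 0 (dot q.1 ξ + q.2) with h | h
    · exact hqsmax ⟨hq, h⟩
    · linarith
  -- contact set
  set Z : Set (Fin N → ℝ) := {x | g x = dot qs.1 x + qs.2} with hZ
  have hzb : ∀ x ∈ Z, ‖x‖ ≤ (max 1 ((2*(C^2*((2:ℝ)^p+4))) ^ (1/(p-1)))) * (‖ξ‖+1) :=
    fun x hx => touch_bound p C hp hC g hgrowth ξ qs.1 qs.2 hAle hA0 x hx
  -- perturbation lemma
  have key : ∀ (b' : Fin N → ℝ) (δ : ℝ), 0 < δ →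
      (∀ x ∈ Z, dot b' x ≤ dot b' ξ - δ) → False := by
    intro b' δ hδ hsep
    have hh0 : ∀ x, 0 ≤ g x - (dot qs.1 x + qs.2) := fun x => sub_nonneg.mpr (hAle x)
    obtain ⟨M, hM⟩ : ∃ M : ℝ,
        M = (∑ i, |qs.1 i|) + (∑ i, |b' i|) + |qs.2| + |dot b' ξ| + δ + 1 := ⟨_, rfl⟩
    have habs1 : 0 ≤ ∑ i, |qs.1 i| := Finset.sum_nonneg fun i _ => abs_nonneg _
    have habs2 : 0 ≤ ∑ i, |b' i| := Finset.sum_nonneg fun i _ => abs_nonneg _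
    have habs3 := abs_nonneg qs.2
    have habs4 := abs_nonneg (dot b' ξ)
    have hM1 : 1 ≤ M := by rw [hM]; linarith
    have hφle : ∀ x : Fin N → ℝ, dot b' x - dot b' ξ + δ/2 ≤ M * (‖x‖ + 1) := by
      intro x
      have h1 : |dot b' x| ≤ (∑ i, |b' i|) * ‖x‖ := abs_dot_le b' x
      have h2 : (∑ i, |b' i|) * ‖x‖ ≤ M * ‖x‖ :=
        mul_le_mul_of_nonneg_right (by rw [hM]; linarith) (norm_nonneg x)
      have h3 : - dot b' ξ ≤ |dot b' ξ| := neg_le_abs _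
      have h4 : dot b' x ≤ |dot b' x| := le_abs_self _
      have h5 : |dot b' ξ| + δ/2 ≤ M := by rw [hM]; linarith
      have h6 : M * (‖x‖ + 1) = M * ‖x‖ + M := by ring
      linarith
    have hAup : ∀ x : Fin N → ℝ, dot qs.1 x + qs.2 ≤ M * (‖x‖ + 1) := by
      intro x
      have h1 : |dot qs.1 x| ≤ (∑ i, |qs.1 i|) * ‖x‖ := abs_dot_le qs.1 x
      have h2 : (∑ i, |qs.1 i|) * ‖x‖ ≤ M * ‖x‖ :=
        mul_le_mul_of_nonneg_right (by rw [hM]; linarith) (norm_nonneg x)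
      have h3 : qs.2 ≤ |qs.2| := le_abs_self _
      have h4 : dot qs.1 x ≤ |dot qs.1 x| := le_abs_self _
      have h5 : |qs.2| ≤ M := by rw [hM]; linarith
      have h6 : M * (‖x‖ + 1) = M * ‖x‖ + M := by ring
      linarith
    obtain ⟨ρ, hρ1, hρ⟩ := coercive_bound p C M hp hC hM1
    have hbig : ∀ x : Fin N → ℝ, ρ ≤ ‖x‖ →
        dot b' x - dot b' ξ + δ/2 ≤ g x - (dot qs.1 x + qs.2) := by
      intro x hx
      have h1 := hρ ‖x‖ (norm_nonneg x) hx
      have h2 := (hgrowth x).1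
      have h3 := hAup x
      have h4 := hφle x
      linarith
    obtain ⟨η, hη0, hη1, hηW⟩ : ∃ η : ℝ, 0 < η ∧ η ≤ 1 ∧
        ∀ x : Fin N → ℝ, ‖x‖ ≤ ρ → 0 ≤ dot b' x - dot b' ξ + δ/2 →
          η * (dot b' x - dot b' ξ + δ/2) ≤ g x - (dot qs.1 x + qs.2) := by
      have hWcl : IsClosed {x : Fin N → ℝ | ‖x‖ ≤ ρ ∧ 0 ≤ dot b' x - dot b' ξ + δ/2} := by
        refine IsClosed.inter ?_ ?_
        · exact isClosed_le continuous_norm continuous_const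
        · exact isClosed_le continuous_const
            (((dot_continuous b').sub continuous_const).add continuous_const)
      have hWbd : Bornology.IsBounded {x : Fin N → ℝ | ‖x‖ ≤ ρ ∧ 0 ≤ dot b' x - dot b' ξ + δ/2} :=
        isBounded_iff_forall_norm_le.mpr ⟨ρ, fun x hx => hx.1⟩
      have hWcpt := Metric.isCompact_of_isClosed_isBounded hWcl hWbd
      rcases Set.eq_empty_or_nonempty
          {x : Fin N → ℝ | ‖x‖ ≤ ρ ∧ 0 ≤ dot b' x - dot b' ξ + δ/2} with hWe | hWne
      · refine ⟨1, one_pos, le_rfl, fun x hx1 hx2 => ?_⟩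
        exact absurd (show x ∈ {x : Fin N → ℝ | ‖x‖ ≤ ρ ∧ 0 ≤ dot b' x - dot b' ξ + δ/2}
          from ⟨hx1, hx2⟩) (by rw [hWe]; exact notMem_empty x)
      · have hhc : Continuous fun x : Fin N → ℝ => g x - (dot qs.1 x + qs.2) :=
          hgcont.sub ((dot_continuous qs.1).add continuous_const)
        obtain ⟨x₀, hx₀W, hx₀min⟩ := hWcpt.exists_isMinOn hWne hhc.continuousOn
        have hx₀pos : 0 < g x₀ - (dot qs.1 x₀ + qs.2) := by
          rcases (hh0 x₀).lt_or_eq with h | h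
          · exact h
          · exfalso
            have hx₀Z : x₀ ∈ Z := by
              show g x₀ = dot qs.1 x₀ + qs.2
              linarith
            have := hsep x₀ hx₀Z
            have := hx₀W.2
            linarith
        have hd : 0 < M*(ρ+1)+1 := by nlinarith [hM1, hρ1]
        refine ⟨min 1 ((g x₀ - (dot qs.1 x₀ + qs.2)) / (M*(ρ+1) + 1)), ?_,
          min_le_left _ _, ?_⟩
        · exact lt_min one_pos (div_pos hx₀pos hd)
        · intro x hx1 hx2
          have hφub : dot b' x - dot b' ξ + δ/2 ≤ M*(ρ+1) + 1 := by
            have h1 := hφle x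
            have h2 : M * (‖x‖+1) ≤ M*(ρ+1) :=
              mul_le_mul_of_nonneg_left (by linarith) (by linarith)
            linarith
          calc min 1 ((g x₀ - (dot qs.1 x₀ + qs.2)) / (M*(ρ+1) + 1))
                * (dot b' x - dot b' ξ + δ/2)
              ≤ ((g x₀ - (dot qs.1 x₀ + qs.2)) / (M*(ρ+1) + 1))
                * (dot b' x - dot b' ξ + δ/2) :=
                mul_le_mul_of_nonneg_right (min_le_right _ _) hx2
            _ ≤ ((g x₀ - (dot qs.1 x₀ + qs.2)) / (M*(ρ+1) + 1)) * (M*(ρ+1) + 1) :=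
                mul_le_mul_of_nonneg_left hφub (le_of_lt (div_pos hx₀pos hd))
            _ = g x₀ - (dot qs.1 x₀ + qs.2) := div_mul_cancel₀ _ hd.ne'
            _ ≤ g x - (dot qs.1 x + qs.2) := hx₀min ⟨hx1, hx2⟩
    have hall : ∀ x : Fin N → ℝ,
        η * (dot b' x - dot b' ξ + δ/2) ≤ g x - (dot qs.1 x + qs.2) := by
      intro x
      rcases le_or_gt (dot b' x - dot b' ξ + δ/2) 0 with hφ | hφ
      · have h1 : η * (dot b' x - dot b' ξ + δ/2) ≤ 0 := by nlinarith [hη0.le, hφ]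
        exact h1.trans (hh0 x)
      · rcases le_or_gt ρ ‖x‖ with hρx | hρx
        · have h1 := hbig x hρx
          nlinarith [hφ, hη1, hη0.le, h1]
        · exact hηW x hρx.le hφ.le
    have hmem' : dot (qs.1 + η • b') ξ + (qs.2 + η * (δ/2 - dot b' ξ)) ∈ S := by
      refine ⟨(qs.1 + η • b', qs.2 + η * (δ/2 - dot b' ξ)), fun μ => ?_, rfl⟩
      have h1 : dot (qs.1 + η • b') μ = dot qs.1 μ + η * dot b' μ := by
        rw [dot_add_left, dot_smul_left]
      have h2 := hall μ
      rw [h1]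
      nlinarith [h2]
    have hle := le_csSup hbdd hmem'
    have hgt : dot (qs.1 + η • b') ξ + (qs.2 + η * (δ/2 - dot b' ξ))
        = sSup S + η * (δ/2) := by
      rw [dot_add_left, dot_smul_left, ← hAval]; ring
    rw [hgt] at hle
    nlinarith [hle, mul_pos hη0 (by linarith : (0:ℝ) < δ/2)]
  -- ξ lies in the convex hull of the contact set
  have hmem : ξ ∈ convexHull ℝ Z := by
    by_contra hne
    have hZcl : IsClosed Z := isClosed_eq hgcont ((dot_continuous qs.1).add continuous_const)
    have hZbd : Bornology.IsBounded Z :=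
      Metric.isBounded_iff_subset_closedBall 0 |>.mpr
        ⟨_, fun x hx => by simpa [Metric.mem_closedBall, dist_zero_right] using hzb x hx⟩
    have hZcpt : IsCompact Z := Metric.isCompact_of_isClosed_isBounded hZcl hZbd
    have hconvcpt := isCompact_convexHull_fin hZcpt
    obtain ⟨f, u, hfu, huf⟩ :=
      geometric_hahn_banach_closed_point (convex_convexHull ℝ Z) hconvcpt.isClosed hne
    have hfx : ∀ x : Fin N → ℝ, f x = dot (fun i => f (fun j => if i = j then 1 else 0)) x := by
      intro x
      have := LinearMap.pi_apply_eq_sum_univ (f : (Fin N → ℝ) →L[ℝ] ℝ).toLinearMap x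
      simp only [ContinuousLinearMap.coe_coe] at this
      rw [this]
      unfold dot
      exact Finset.sum_congr rfl fun i _ => by rw [smul_eq_mul]; ring
    refine key (fun i => f (fun j => if i = j then 1 else 0)) (f ξ - u) (by linarith) (fun x hxZ => ?_)
    have : f x < u := hfu x (subset_convexHull ℝ Z hxZ)
    rw [← hfx, ← hfx]
    linarith
  -- Caratheodory
  obtain ⟨ι, hfin, z, w, hrange, haff, hpos, hsum1, hsumx⟩ :=
    eq_pos_convex_span_of_mem_convexHull hmem
  letI := hfin
  have hcard1 : 0 < Fintype.card ι := by
    rcases Nat.eq_zero_or_pos (Fintype.card ι) with h | h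
    · exfalso
      haveI := Fintype.card_eq_zero_iff.mp h
      rw [Finset.univ_eq_empty, Finset.sum_empty] at hsum1
      norm_num at hsum1
    · exact h
  have hcardN : Fintype.card ι ≤ N + 1 := by
    have h1 := haff.card_le_finrank_succ
    have h2 : Module.finrank ℝ (vectorSpan ℝ (Set.range z)) ≤ Module.finrank ℝ (Fin N → ℝ) :=
      Submodule.finrank_le _
    have h3 : Module.finrank ℝ (Fin N → ℝ) = N := by simp [Module.finrank_pi]
    omega
  refine ⟨Fintype.card ι - 1, by omega, ?_⟩
  have hcm : Fintype.card ι = (Fintype.card ι - 1) + 1 := by omega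
  set m := Fintype.card ι - 1 with hm
  set e : Fin (m+1) ≃ ι := (Fintype.equivFinOfCardEq hcm).symm with he
  refine ⟨z ∘ e, w ∘ e, ?_, ?_, ?_, ?_, ?_, ?_⟩
  · intro j
    constructor
    · exact hpos (e j)
    · have := Finset.single_le_sum (f := w) (fun i _ => (hpos i).le) (Finset.mem_univ (e j))
      rw [hsum1] at this
      exact this
  · exact (Equiv.sum_comp e w).trans hsum1
  · exact ((Equiv.sum_comp e (fun i => w i • z i)).trans hsumx).symm
  · -- value identity
    have hgZ : ∀ i : ι, g (z i) = dot qs.1 (z i) + qs.2 := fun i => hrange (mem_range_self i)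
    have hsum1' : ∑ j : Fin (m+1), w (e j) = 1 := (Equiv.sum_comp e w).trans hsum1
    have hsumx' : ∑ j : Fin (m+1), w (e j) • z (e j) = ξ :=
      (Equiv.sum_comp e fun i => w i • z i).trans hsumx
    have hd := dot_sum_right qs.1 (fun j => w (e j)) (fun j => z (e j))
    rw [hsumx'] at hd
    calc convEnv g ξ = dot qs.1 ξ + qs.2 := by rw [hconv, hAval]
      _ = (∑ j : Fin (m+1), w (e j) * dot qs.1 (z (e j)))
          + (∑ j : Fin (m+1), w (e j)) * qs.2 := by rw [← hd, hsum1']; ring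
      _ = ∑ j : Fin (m+1), (w (e j) * dot qs.1 (z (e j)) + w (e j) * qs.2) := by
          rw [Finset.sum_add_distrib, Finset.sum_mul]
      _ = ∑ j, (w ∘ e) j * g ((z ∘ e) j) := by
          refine Finset.sum_congr rfl fun j _ => ?_
          simp only [Function.comp_apply]
          rw [hgZ (e j)]
          ring
  · -- linear independence
    have haff' : AffineIndependent ℝ (z ∘ e) := haff.comp_embedding e.toEmbedding
    have hli := (affineIndependent_iff_linearIndependent_vsub ℝ (z ∘ e) 0).mp haff'
    have hembinj : Function.Injective
        (fun j : Fin m => (⟨j.succ, Fin.succ_ne_zero j⟩ : {x : Fin (m+1) // x ≠ 0})) := by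
      intro i j hij
      have : (i : Fin m).succ = j.succ := congrArg Subtype.val hij
      exact Fin.succ_injective _ this
    have := hli.comp _ hembinj
    simpa [vsub_eq_sub, Function.comp_def] using this
  · intro j
    exact hzb ((z ∘ e) j) (hrange (mem_range_self (e j)))
end

section
/- Let g: ℝ^N → ℝ be lower semicontinuous with superlinear growth (g(μ)/|μ| → ∞ as |μ| → ∞). Then for every ξ ∈ ℝ^N, the supremum in g**(ξ) = sup{A(ξ) : A: ℝ^N → ℝ affine, A ≤ g} is attained by some affine function A_ξ with A_ξ ≤ g and A_ξ(ξ) = g**(ξ). -/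
open Set Filter

noncomputable def affOf {N : ℕ} (b : Fin N → ℝ) (c : ℝ) : (Fin N → ℝ) →ᵃ[ℝ] ℝ where
  toFun := fun μ => (∑ i, b i * μ i) + c
  linear := ∑ i, b i • LinearMap.proj i
  map_vadd' := by
    intro p v
    simp only [LinearMap.coe_sum, Finset.sum_apply, LinearMap.smul_apply,
      LinearMap.proj_apply, smul_eq_mul, vadd_eq_add, Pi.add_apply, mul_add,
      Finset.sum_add_distrib]
    ring

@[simp] lemma affOf_apply {N : ℕ} (b : Fin N → ℝ) (c : ℝ) (μ : Fin N → ℝ) :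
    affOf b c μ = (∑ i, b i * μ i) + c := rfl

lemma exists_pair {N : ℕ} (A : (Fin N → ℝ) →ᵃ[ℝ] ℝ) :
    ∃ p : (Fin N → ℝ) × ℝ, ∀ μ, (∑ i, p.1 i * μ i) + p.2 = A μ := by
  refine ⟨(fun i => A.linear (fun j => if i = j then 1 else 0), A 0), fun μ => ?_⟩
  have h1 : A μ = A.linear μ + A 0 := by
    have := A.map_vadd 0 μ
    simpa using this
  rw [h1, LinearMap.pi_apply_eq_sum_univ A.linear μ]
  simp [smul_eq_mul, mul_comm]

/-- for a lower semicontinuous function with superlinear growth, the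
supremum defining the convex envelope is attained by an affine function touching
`g**` at `ξ`. -/
theorem convEnv_attained_affine
    (N : ℕ) (g : (Fin N → ℝ) → ℝ)
    (hlsc : LowerSemicontinuous g)
    (hsuper : Tendsto (fun μ : Fin N → ℝ => g μ / ‖μ‖) (Filter.cocompact _) Filter.atTop)
    (ξ : Fin N → ℝ) :
    ∃ A : (Fin N → ℝ) →ᵃ[ℝ] ℝ, (∀ μ, A μ ≤ g μ) ∧ A ξ = convEnv g ξ := by
  classical
  set S : Set ℝ := {r : ℝ | ∃ A : (Fin N → ℝ) →ᵃ[ℝ] ℝ, (∀ μ, A μ ≤ g μ) ∧ r = A ξ} with hS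
  set s : ℝ := sSup S with hs
  -- Step 1: g is bounded below by a constant
  have h1 : ∀ᶠ μ in cocompact (Fin N → ℝ), 1 ≤ g μ / ‖μ‖ :=
    hsuper.eventually (eventually_ge_atTop 1)
  rw [Filter.eventually_iff, Filter.mem_cocompact] at h1
  obtain ⟨K, hK, hKsub⟩ := h1
  set K' : Set (Fin N → ℝ) := K ∪ {0} with hK'
  have hK'cpt : IsCompact K' := hK.union isCompact_singleton
  have hout : ∀ μ, μ ∉ K' → 0 ≤ g μ := by
    intro μ hμ
    have hμK : μ ∉ K := fun h => hμ (Or.inl h)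
    have hμ0 : μ ≠ 0 := fun h => hμ (Or.inr (by simp [h]))
    have hnorm : 0 < ‖μ‖ := norm_pos_iff.mpr hμ0
    have := hKsub hμK
    have hge : ‖μ‖ ≤ g μ := (one_le_div hnorm).mp this
    linarith
  have hm : ∃ m : ℝ, ∀ x ∈ K', m ≤ g x := by
    obtain ⟨t, ht⟩ := hK'cpt.elim_nhds_subcover' (fun x _ => {μ | g x - 1 < g μ})
      (fun x _ => hlsc x (g x - 1) (by linarith))
    rcases t.eq_empty_or_nonempty with hte | hte
    · subst hte
      refine ⟨0, fun x hx => ?_⟩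
      have := ht hx
      simp at this
    · refine ⟨t.inf' hte (fun x => g x - 1), fun x hx => ?_⟩
      have := ht hx
      simp only [mem_iUnion, mem_setOf_eq] at this
      obtain ⟨y, hy, hylt⟩ := this
      calc t.inf' hte (fun x => g x - 1) ≤ g y - 1 := Finset.inf'_le _ hy
        _ ≤ g x := by linarith
  obtain ⟨m, hm⟩ := hm
  have hlow : ∀ μ, min m 0 ≤ g μ := by
    intro μ
    by_cases h : μ ∈ K'
    · exact le_trans (min_le_left _ _) (hm μ h)
    · exact le_trans (min_le_right _ _) (hout μ h)
  -- S nonempty and bounded above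
  have hS_ne : S.Nonempty := by
    refine ⟨min m 0, AffineMap.const ℝ (Fin N → ℝ) (min m 0), fun μ => ?_, by simp⟩
    simpa using hlow μ
  have hS_bdd : BddAbove S := by
    refine ⟨g ξ, fun r hr => ?_⟩
    obtain ⟨A, hA, rfl⟩ := hr
    exact hA ξ
  -- The constraint set
  set T : Set ((Fin N → ℝ) × ℝ) :=
    {p | (∀ μ, (∑ i, p.1 i * μ i) + p.2 ≤ g μ) ∧ s - 1 ≤ (∑ i, p.1 i * ξ i) + p.2} with hT
  have hT_ne : T.Nonempty := by
    obtain ⟨r, hrS, hr⟩ := exists_lt_of_lt_csSup hS_ne (show s - 1 < s by linarith)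
    obtain ⟨A, hA, rfl⟩ := hrS
    obtain ⟨p, hp⟩ := exists_pair A
    exact ⟨p, fun μ => (hp μ).le.trans (hA μ), by rw [hp ξ]; linarith⟩
  have hcont : ∀ μ : Fin N → ℝ,
      Continuous (fun p : (Fin N → ℝ) × ℝ => (∑ i, p.1 i * μ i) + p.2) := by
    intro μ
    exact (continuous_finset_sum _ fun i _ =>
      ((continuous_apply i).comp continuous_fst).mul continuous_const).add continuous_snd
  have hT_closed : IsClosed T := by
    have : T = (⋂ μ, {p : (Fin N → ℝ) × ℝ | (∑ i, p.1 i * μ i) + p.2 ≤ g μ}) ∩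
        {p | s - 1 ≤ (∑ i, p.1 i * ξ i) + p.2} := by
      ext p; simp [hT, mem_iInter]
    rw [this]
    exact (isClosed_iInter fun μ => isClosed_le (hcont μ) continuous_const).inter
      (isClosed_le continuous_const (hcont ξ))
  -- Bounds
  set e : Fin N → (Fin N → ℝ) := fun i j => if i = j then 1 else 0 with he
  set B : Fin N → ℝ := fun i => |g (ξ + e i)| + |g (ξ - e i)| + |s| + 1 with hB
  set M : ℝ := ∑ i, B i with hM
  have hBpos : ∀ i, 0 ≤ B i := fun i => by positivity
  have hBM : ∀ i, B i ≤ M := fun i =>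
    Finset.single_le_sum (fun j _ => hBpos j) (Finset.mem_univ i)
  have hM0 : 0 ≤ M := Finset.sum_nonneg fun i _ => hBpos i
  set M' : ℝ := M * ∑ i, |ξ i| with hM'
  have hsum_e : ∀ (b : Fin N → ℝ) (i), (∑ j, b j * e i j) = b i := by
    intro b i
    simp [he, mul_ite, Finset.sum_ite_eq]
  have hbound : ∀ p ∈ T, p ∈ (Metric.closedBall (0 : Fin N → ℝ) M) ×ˢ
      (Icc (s - 1 - M') (g ξ + M')) := by
    rintro ⟨b, c⟩ ⟨hP, hv1⟩
    have hv2 : (∑ i, b i * ξ i) + c ≤ g ξ := hP ξ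
    have hbi : ∀ i, |b i| ≤ M := by
      intro i
      have h₁ := hP (ξ + e i)
      have h₂ := hP (ξ - e i)
      have e₁ : (∑ j, b j * (ξ + e i) j) = (∑ j, b j * ξ j) + b i := by
        simp only [Pi.add_apply, mul_add, Finset.sum_add_distrib, hsum_e]
      have e₂ : (∑ j, b j * (ξ - e i) j) = (∑ j, b j * ξ j) - b i := by
        simp only [Pi.sub_apply, mul_sub, Finset.sum_sub_distrib, hsum_e]
      rw [e₁] at h₁; rw [e₂] at h₂
      have hg₁ : g (ξ + e i) ≤ |g (ξ + e i)| := le_abs_self _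
      have hg₂ : g (ξ - e i) ≤ |g (ξ - e i)| := le_abs_self _
      have hss : -|s| ≤ s := neg_abs_le s
      have := hBM i
      have habs1 : 0 ≤ |g (ξ - e i)| := abs_nonneg _
      have habs2 : 0 ≤ |g (ξ + e i)| := abs_nonneg _
      have hsabs : s ≤ |s| := le_abs_self s
      have hsabs' : -|s| ≤ s := neg_abs_le s
      have hBMi := hBM i
      simp only [hB] at hBMi
      rw [abs_le]
      constructor
      · linarith
      · linarith
    have hbnorm : ‖b‖ ≤ M := by
      rw [pi_norm_le_iff_of_nonneg hM0]
      intro i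
      simpa [Real.norm_eq_abs] using hbi i
    have hsumabs : |∑ i, b i * ξ i| ≤ M' := by
      calc |∑ i, b i * ξ i| ≤ ∑ i, |b i * ξ i| := Finset.abs_sum_le_sum_abs _ _
        _ ≤ ∑ i, M * |ξ i| := by
            refine Finset.sum_le_sum fun i _ => ?_
            rw [abs_mul]
            exact mul_le_mul_of_nonneg_right (hbi i) (abs_nonneg _)
        _ = M' := by rw [hM', Finset.mul_sum]
    have hsa := abs_le.mp hsumabs
    refine ⟨?_, ?_, ?_⟩
    · simpa [mem_closedBall_zero_iff] using hbnorm
    · linarith [hsa.1, hsa.2]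
    · linarith [hsa.1, hsa.2]
  -- T is compact
  have hT_cpt : IsCompact T :=
    ((isCompact_closedBall (0 : Fin N → ℝ) M).prod isCompact_Icc).of_isClosed_subset
      hT_closed hbound
  -- maximize ev on T
  obtain ⟨p₀, hp₀T, hmax⟩ := hT_cpt.exists_isMaxOn hT_ne (hcont ξ).continuousOn
  have hp₀S : (∑ i, p₀.1 i * ξ i) + p₀.2 ∈ S :=
    ⟨affOf p₀.1 p₀.2, fun μ => by simpa using hp₀T.1 μ, by simp⟩
  have hle : (∑ i, p₀.1 i * ξ i) + p₀.2 ≤ s := le_csSup hS_bdd hp₀S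
  have hge : s ≤ (∑ i, p₀.1 i * ξ i) + p₀.2 := by
    by_contra hcon
    push_neg at hcon
    obtain ⟨r, hrS, hr⟩ := exists_lt_of_lt_csSup hS_ne
      (show max ((∑ i, p₀.1 i * ξ i) + p₀.2) (s - 1) < s from max_lt hcon (by linarith))
    obtain ⟨A, hA, rfl⟩ := hrS
    obtain ⟨p, hp⟩ := exists_pair A
    have hpT : p ∈ T := by
      refine ⟨fun μ => (hp μ).le.trans (hA μ), ?_⟩
      rw [hp ξ]
      exact le_trans (le_max_right _ _) hr.le
    have h2 : A ξ ≤ (∑ i, p₀.1 i * ξ i) + p₀.2 := by simpa [hp ξ] using hmax hpT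
    exact absurd (lt_of_le_of_lt (le_max_left _ _) hr) (not_lt.mpr h2)
  refine ⟨affOf p₀.1 p₀.2, fun μ => by simpa using hp₀T.1 μ, ?_⟩
  have : convEnv g ξ = s := rfl
  rw [this]
  simp only [affOf_apply]
  linarith
end

section
/- Suppose an affine function A: ℝ^N → ℝ satisfies (1/C)|μ|^p − C ≤ A(μ) ≤ C|μ|^p + C for all μ in a convex set S ⊂ ℝ^N, where p > 1 and C > 0. If S is the convex hull of finitely many points and contains a fixed point ξ, then S is bounded, with diameter bound depending only on p, C, and |ξ|; in particular every extreme point ξ_j of S satisfies |ξ_j| ≤ K(|ξ|+1) for a constant K = K(p, C). -/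
open Set

set_option maxHeartbeats 1000000 in
/-- Key estimate: every point of a convex set `S` on which an affine map is trapped
between `(1/C)‖·‖^p − C` and `C‖·‖^p + C` satisfies a bound `‖μ‖ ≤ K·(‖ξ‖+1)`,
where `ξ ∈ S` is fixed and `K = K(p,C)`. -/
theorem norm_le_of_affine_trapped
    {p C : ℝ} (hp : 1 < p) (hC : 0 < C) {N : ℕ}
    (A : (Fin N → ℝ) →ᵃ[ℝ] ℝ) {S : Set (Fin N → ℝ)} (hconv : Convex ℝ S)
    {ξ : Fin N → ℝ} (hξ : ξ ∈ S)
    (htrap : ∀ μ ∈ S, (1 / C) * ‖μ‖ ^ p - C ≤ A μ ∧ A μ ≤ C * ‖μ‖ ^ p + C)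
    {μ : Fin N → ℝ} (hμ : μ ∈ S) :
    ‖μ‖ ≤ (2 + (2 * (C ^ 2 * ((2:ℝ) ^ p + 3))) ^ (p - 1)⁻¹) * (‖ξ‖ + 1) := by
  set B : ℝ := ‖ξ‖ + 1 with hBdef
  have hB1 : (1:ℝ) ≤ B := by have := norm_nonneg ξ; simp only [hBdef]; linarith
  have hB0 : (0:ℝ) < B := by linarith
  set c : ℝ := 2 * (C ^ 2 * ((2:ℝ) ^ p + 3)) with hcdef
  have h2p : (0:ℝ) < (2:ℝ) ^ p := Real.rpow_pos_of_pos (by norm_num) p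
  have hc0 : 0 < c := by positivity
  set K : ℝ := 2 + c ^ (p - 1)⁻¹ with hKdef
  have hKc : (0:ℝ) ≤ c ^ (p - 1)⁻¹ := Real.rpow_nonneg hc0.le _
  have hK2 : (2:ℝ) ≤ K := by simp only [hKdef]; linarith
  have hxi : ‖ξ‖ ≤ B := by linarith
  rcases le_or_gt ‖μ - ξ‖ B with hr | hr
  · -- easy case : μ is close to ξ
    have : ‖μ‖ ≤ ‖μ - ξ‖ + ‖ξ‖ := by
      simpa using norm_add_le (μ - ξ) ξ
    have : ‖μ‖ ≤ 2 * B := by linarith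
    calc ‖μ‖ ≤ 2 * B := this
      _ ≤ K * B := mul_le_mul_of_nonneg_right hK2 hB0.le
  · set r : ℝ := ‖μ - ξ‖ with hrdef
    have hr0 : 0 < r := lt_of_le_of_lt hB0.le hr
    set t : ℝ := B / r with htdef
    have ht0 : 0 < t := div_pos hB0 hr0
    have ht1 : t < 1 := (div_lt_one hr0).2 hr
    have htr : t * r = B := by rw [htdef]; field_simp
    -- the intermediate point x
    set x : Fin N → ℝ := (1 - t) • ξ + t • μ with hxdef
    have hxS : x ∈ S := hconv hξ hμ (by linarith) ht0.le (by ring)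
    have hAx : A x = (1 - t) * A ξ + t * A μ := by
      rw [hxdef, Convex.combo_affine_apply (by ring)]; simp
    -- norm bound on x
    have hμr : ‖μ‖ ≤ r + ‖ξ‖ := by
      have := norm_add_le (μ - ξ) ξ; simpa using this
    have hxnorm : ‖x‖ ≤ 2 * B := by
      have h1 : ‖x‖ ≤ ‖(1 - t) • ξ‖ + ‖t • μ‖ := norm_add_le _ _
      rw [norm_smul, norm_smul] at h1
      have h2 : ‖(1 - t : ℝ)‖ = 1 - t := abs_of_nonneg (by linarith)
      have h3 : ‖(t : ℝ)‖ = t := abs_of_nonneg ht0.le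
      rw [h2, h3] at h1
      have h4 : t * ‖μ‖ ≤ t * (r + ‖ξ‖) := mul_le_mul_of_nonneg_left hμr ht0.le
      have h5 : t * (r + ‖ξ‖) = t * r + t * ‖ξ‖ := by ring
      have h6 : t * ‖ξ‖ ≤ 1 * ‖ξ‖ := mul_le_mul_of_nonneg_right ht1.le (norm_nonneg ξ)
      rw [h5, htr] at h4
      nlinarith [norm_nonneg ξ]
    -- trapping bounds
    obtain ⟨hlo_x, hhi_x⟩ := htrap x hxS
    obtain ⟨hlo_ξ, _⟩ := htrap ξ hξ
    obtain ⟨hlo_μ, _⟩ := htrap μ hμ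
    have hxp : ‖x‖ ^ p ≤ (2 * B) ^ p :=
      Real.rpow_le_rpow (norm_nonneg _) hxnorm (by linarith)
    have h2Bp : (2 * B) ^ p = 2 ^ p * B ^ p := Real.mul_rpow (by norm_num) hB0.le
    have hξp : 0 ≤ ‖ξ‖ ^ p := Real.rpow_nonneg (norm_nonneg _) _
    have hμp : 0 ≤ ‖μ‖ ^ p := Real.rpow_nonneg (norm_nonneg _) _
    -- -A ξ ≤ C
    have hAξ : -A ξ ≤ C := by
      have h1 : 0 ≤ (1 / C) * ‖ξ‖ ^ p := by positivity
      linarith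
    -- t * A μ ≤ C (2B)^p + 2C
    have hAxle : A x ≤ C * (2 * B) ^ p + C := by
      have := mul_le_mul_of_nonneg_left hxp hC.le
      linarith
    have hkey1 : t * A μ ≤ C * (2 * B) ^ p + 2 * C := by
      have h1 : t * A μ = A x - (1 - t) * A ξ := by linarith [hAx]
      have h2 : (1 - t) * (-A ξ) ≤ (1 - t) * C :=
        mul_le_mul_of_nonneg_left hAξ (by linarith)
      have h3 : (1 - t) * C ≤ 1 * C := mul_le_mul_of_nonneg_right (by linarith) hC.le
      have h4 : (1 - t) * (-A ξ) = -((1 - t) * A ξ) := by ring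
      rw [h4] at h2
      linarith
    have hkey2 : t * ((1 / C) * ‖μ‖ ^ p) ≤ C * (2 * B) ^ p + 3 * C := by
      have h1 : t * ((1 / C) * ‖μ‖ ^ p - C) ≤ t * A μ :=
        mul_le_mul_of_nonneg_left hlo_μ ht0.le
      have h2 : t * ((1 / C) * ‖μ‖ ^ p - C) = t * ((1 / C) * ‖μ‖ ^ p) - t * C := by ring
      have h3 : t * C ≤ 1 * C := mul_le_mul_of_nonneg_right ht1.le hC.le
      rw [h2] at h1
      linarith
    -- ‖μ‖^p ≤ r * C^2 * (2^p + 3) * B^(p-1)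
    have hBp : B ^ p = B ^ (p - 1) * B := by
      rw [← Real.rpow_add_one hB0.ne' (p - 1)]; norm_num
    have hBp1 : 0 < B ^ (p - 1) := Real.rpow_pos_of_pos hB0 _
    have hB_le_Bp : B ≤ B ^ p := by
      have := Real.rpow_le_rpow_of_exponent_le hB1 hp.le
      rwa [Real.rpow_one] at this
    have hmain : ‖μ‖ ^ p ≤ r * (C ^ 2 * (2 ^ p + 3)) * B ^ (p - 1) := by
      -- from hkey2 : (B/r) * (1/C) * ‖μ‖^p ≤ C*2^p*B^p + 3C
      have h1 : B * ‖μ‖ ^ p ≤ r * C * (C * (2 * B) ^ p + 3 * C) := by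
        have := mul_le_mul_of_nonneg_left hkey2 (by positivity : (0:ℝ) ≤ r * C)
        have hrw : r * C * (t * (1 / C * ‖μ‖ ^ p)) = (t * r) * ‖μ‖ ^ p := by
          field_simp
        rw [hrw, htr] at this
        exact this
      have h2 : r * C * (C * (2 * B) ^ p + 3 * C)
          = r * C ^ 2 * (2 ^ p * B ^ p + 3) := by rw [h2Bp]; ring
      have h3 : 2 ^ p * B ^ p + 3 ≤ (2 ^ p + 3) * B ^ p := by linarith
      have h4 : B * ‖μ‖ ^ p ≤ r * C ^ 2 * ((2 ^ p + 3) * B ^ p) := by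
        have h4' := mul_le_mul_of_nonneg_left h3 (by positivity : (0:ℝ) ≤ r * C ^ 2)
        linarith
      rw [hBp] at h4
      have h5 : B * ‖μ‖ ^ p ≤ B * (r * (C ^ 2 * (2 ^ p + 3)) * B ^ (p - 1)) := by
        calc B * ‖μ‖ ^ p ≤ r * C ^ 2 * ((2 ^ p + 3) * (B ^ (p - 1) * B)) := h4
          _ = B * (r * (C ^ 2 * (2 ^ p + 3)) * B ^ (p - 1)) := by ring
      exact le_of_mul_le_mul_left h5 hB0
    rcases le_or_gt ‖μ‖ B with hmB | hmB
    · calc ‖μ‖ ≤ 2 * B := by linarith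
        _ ≤ K * B := mul_le_mul_of_nonneg_right hK2 hB0.le
    · -- ‖μ‖ > B ≥ 1
      have hm0 : 0 < ‖μ‖ := lt_trans hB0 hmB
      have hr2m : r ≤ 2 * ‖μ‖ := by
        have : r ≤ ‖μ‖ + ‖ξ‖ := by
          have := norm_sub_le μ ξ; linarith
        linarith
      have h6 : ‖μ‖ ^ p ≤ 2 * ‖μ‖ * (C ^ 2 * (2 ^ p + 3)) * B ^ (p - 1) := by
        have hcc : (0:ℝ) ≤ C ^ 2 * (2 ^ p + 3) * B ^ (p - 1) :=
          le_of_lt (mul_pos (by positivity) hBp1)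
        calc ‖μ‖ ^ p ≤ r * (C ^ 2 * (2 ^ p + 3)) * B ^ (p - 1) := hmain
          _ = r * (C ^ 2 * (2 ^ p + 3) * B ^ (p - 1)) := by ring
          _ ≤ 2 * ‖μ‖ * (C ^ 2 * (2 ^ p + 3) * B ^ (p - 1)) :=
              mul_le_mul_of_nonneg_right hr2m hcc
          _ = 2 * ‖μ‖ * (C ^ 2 * (2 ^ p + 3)) * B ^ (p - 1) := by ring
      have hmp : ‖μ‖ ^ p = ‖μ‖ ^ (p - 1) * ‖μ‖ := by
        rw [← Real.rpow_add_one hm0.ne' (p - 1)]; norm_num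
      have h7 : ‖μ‖ ^ (p - 1) ≤ c * B ^ (p - 1) := by
        have h8 : ‖μ‖ ^ (p - 1) * ‖μ‖ ≤ (c * B ^ (p - 1)) * ‖μ‖ := by
          rw [← hmp]; calc ‖μ‖ ^ p ≤ 2 * ‖μ‖ * (C ^ 2 * (2 ^ p + 3)) * B ^ (p - 1) := h6
            _ = (c * B ^ (p - 1)) * ‖μ‖ := by rw [hcdef]; ring
        exact le_of_mul_le_mul_right h8 hm0
      -- conclude ‖μ‖ ≤ c^(1/(p-1)) * B
      have hp1 : (0:ℝ) < p - 1 := by linarith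
      have h9 : (c ^ (p - 1)⁻¹ * B) ^ (p - 1) = c * B ^ (p - 1) := by
        rw [Real.mul_rpow hKc hB0.le, Real.rpow_inv_rpow hc0.le hp1.ne']
      have h10 : ‖μ‖ ^ (p - 1) ≤ (c ^ (p - 1)⁻¹ * B) ^ (p - 1) := by rw [h9]; exact h7
      have h11 : ‖μ‖ ≤ c ^ (p - 1)⁻¹ * B :=
        (Real.rpow_le_rpow_iff (norm_nonneg _) (mul_nonneg hKc hB0.le) hp1).1 h10
      calc ‖μ‖ ≤ c ^ (p - 1)⁻¹ * B := h11
        _ ≤ K * B :=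
            mul_le_mul_of_nonneg_right (by simp only [hKdef]; linarith) hB0.le

/-- an affine function trapped between `(1/C)|μ|^p − C` and `C|μ|^p + C`
on a polytope `S` containing `ξ` forces `S` to be bounded, with a diameter bound
depending only on `p`, `C` and `|ξ|`; in particular every extreme point of `S` is
bounded by `K(|ξ|+1)` with `K = K(p,C)`. -/
theorem affine_trapped_polytope_bounded
    (p C : ℝ) (hp : 1 < p) (hC : 0 < C) :
    ∃ K : ℝ, 0 < K ∧
      ∃ D : ℝ → ℝ,
        ∀ (N : ℕ) (A : (Fin N → ℝ) →ᵃ[ℝ] ℝ) (S : Set (Fin N → ℝ)) (ξ : Fin N → ℝ),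
          (∃ P : Finset (Fin N → ℝ), S = convexHull ℝ (P : Set (Fin N → ℝ))) →
          ξ ∈ S →
          (∀ μ ∈ S, (1 / C) * ‖μ‖ ^ p - C ≤ A μ ∧ A μ ≤ C * ‖μ‖ ^ p + C) →
          Bornology.IsBounded S ∧
          Metric.diam S ≤ D ‖ξ‖ ∧
          (∀ μ ∈ S.extremePoints ℝ, ‖μ‖ ≤ K * (‖ξ‖ + 1)) := by
  have h2p : (0:ℝ) < (2:ℝ) ^ p := Real.rpow_pos_of_pos (by norm_num) p
  have hK0 : 0 < 2 + (2 * (C ^ 2 * ((2:ℝ) ^ p + 3))) ^ (p - 1)⁻¹ := by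
    have : (0:ℝ) ≤ (2 * (C ^ 2 * ((2:ℝ) ^ p + 3))) ^ (p - 1)⁻¹ :=
      Real.rpow_nonneg (by positivity) _
    linarith
  set K : ℝ := 2 + (2 * (C ^ 2 * ((2:ℝ) ^ p + 3))) ^ (p - 1)⁻¹ with hKdef
  refine ⟨K, hK0, fun s => 2 * K * (s + 1), ?_⟩
  intro N A S ξ hpoly hξ htrap
  obtain ⟨P, hP⟩ := hpoly
  have hconv : Convex ℝ S := hP ▸ convex_convexHull ℝ _
  have hbound : ∀ μ ∈ S, ‖μ‖ ≤ K * (‖ξ‖ + 1) := fun μ hμ =>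
    norm_le_of_affine_trapped hp hC A hconv hξ htrap hμ
  have hKB0 : 0 ≤ K * (‖ξ‖ + 1) := by positivity
  refine ⟨?_, ?_, fun μ hμ => hbound μ (extremePoints_subset hμ)⟩
  · apply (Metric.isBounded_closedBall (x := (0 : Fin N → ℝ)) (r := K * (‖ξ‖ + 1))).subset
    intro μ hμ
    rw [Metric.mem_closedBall, dist_zero_right]
    exact hbound μ hμ
  · apply Metric.diam_le_of_forall_dist_le (by positivity)
    intro x hx y hy
    have h1 := hbound x hx
    have h2 := hbound y hy
    calc dist x y = ‖x - y‖ := dist_eq_norm x y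
      _ ≤ ‖x‖ + ‖y‖ := norm_sub_le x y
      _ ≤ 2 * K * (‖ξ‖ + 1) := by linarith
end

section
/- Let m ≤ N and let ξ_0,…,ξ_m ∈ ℝ^N, θ_0,…,θ_m ∈ (0,1] with Σ_{j=0}^m θ_j = 1 and with ξ_1 − ξ_0,…,ξ_m − ξ_0 linearly independent, and set ξ := Σ_j θ_j ξ_j. Define β_{ij} := (ξ_i^N − ξ^N)/(ξ_i^N − ξ_j^N) if (ξ_i^N − ξ^N)(ξ_j^N − ξ^N) < 0, β_{jj} := 1 if ξ_j^N = ξ^N, and β_{ij} := 0 otherwise. Then there exist α_{ij} ∈ [0,1] (0 ≤ i,j ≤ m) with α_{ij} = α_{ji}, α_{ij} = 0 whenever β_{ij} = 0, Σ_{j=0}^m Σ_{i=0}^{j} α_{ij} = 1, θ_j = Σ_{i=0}^m α_{ij} β_{ij} for each j, and ξ = (1/2) Σ_{i,j=0}^m α_{ij}(β_{ij} ξ_j + β_{ji} ξ_i). -/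
open Set Finset

/-- Triangle swap for double sums over `Fin n`. -/
lemma tri_swap {n : ℕ} (F : Fin n → Fin n → ℝ) :
    ∑ j, ∑ i ∈ Finset.Iio j, F j i = ∑ j, ∑ i ∈ Finset.Ioi j, F i j := by
  rw [Finset.sum_sigma', Finset.sum_sigma']
  refine Finset.sum_nbij' (fun x => ⟨x.2, x.1⟩) (fun x => ⟨x.2, x.1⟩) ?_ ?_ (fun _ _ => rfl)
    (fun _ _ => rfl) (fun _ _ => rfl) <;>
    simp only [Finset.mem_sigma, Finset.mem_univ, Finset.mem_Iio, Finset.mem_Ioi,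
      Sigma.forall, true_and, and_true] <;> exact fun _ _ h => h

lemma univ_split {n : ℕ} (f : Fin n → ℝ) (j : Fin n) :
    ∑ i, f i = ∑ i ∈ Finset.Iic j, f i + ∑ i ∈ Finset.Ioi j, f i := by
  rw [← Finset.sum_union (by simp [Finset.disjoint_left])]
  congr 1
  ext i; simp [le_or_gt]

/-- splitting a convex combination on a hyperplane into two-point
convex combinations (Lemma 4.4 of the paper). -/
theorem convex_combination_pairing
    (d m : ℕ) (hm : m ≤ d + 1)
    (ξv : Fin (m + 1) → (Fin (d + 1) → ℝ)) (θ : Fin (m + 1) → ℝ)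
    (hθ : ∀ j, θ j ∈ Set.Ioc (0:ℝ) 1) (hθ1 : (∑ j, θ j) = 1)
    (hli : LinearIndependent ℝ (fun j : Fin m => ξv j.succ - ξv 0))
    (ξ : Fin (d + 1) → ℝ) (hξ : ξ = ∑ j, θ j • ξv j)
    (β : Fin (m + 1) → Fin (m + 1) → ℝ)
    (hβ : ∀ i j, β i j =
      if (ξv i (Fin.last d) - ξ (Fin.last d)) * (ξv j (Fin.last d) - ξ (Fin.last d)) < 0
      then (ξv i (Fin.last d) - ξ (Fin.last d)) / (ξv i (Fin.last d) - ξv j (Fin.last d))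
      else if i = j ∧ ξv j (Fin.last d) = ξ (Fin.last d) then 1 else 0) :
    ∃ α : Fin (m + 1) → Fin (m + 1) → ℝ,
      (∀ i j, α i j ∈ Set.Icc (0:ℝ) 1) ∧
      (∀ i j, α i j = α j i) ∧
      (∀ i j, β i j = 0 → α i j = 0) ∧
      (∑ j, ∑ i ∈ Finset.Iic j, α i j) = 1 ∧
      (∀ j, θ j = ∑ i, α i j * β i j) ∧
      ξ = (1 / 2 : ℝ) • ∑ i, ∑ j, α i j • (β i j • ξv j + β j i • ξv i) := by
  classical
  set c : Fin (m + 1) → ℝ := fun j => ξv j (Fin.last d) - ξ (Fin.last d) with hc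
  have hθpos : ∀ j, 0 < θ j := fun j => (hθ j).1
  -- rewrite β in terms of c
  have hβc : ∀ i j, β i j =
      if c i * c j < 0 then c i / (c i - c j)
      else if i = j ∧ c j = 0 then 1 else 0 := by
    intro i j
    rw [hβ i j]
    have h1 : ξv i (Fin.last d) - ξv j (Fin.last d) = c i - c j := by simp only [hc]; ring
    have h2 : (ξv j (Fin.last d) = ξ (Fin.last d)) ↔ c j = 0 := by
      simp [hc, sub_eq_zero]
    simp only [hc, h1, h2]
  -- ∑ θ_j c_j = 0
  have hξN : ξ (Fin.last d) = ∑ j, θ j * ξv j (Fin.last d) := by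
    have := congrFun hξ (Fin.last d)
    simpa [Finset.sum_apply] using this
  have hsum0 : ∑ j, θ j * c j = 0 := by
    have : ∑ j, θ j * c j = (∑ j, θ j * ξv j (Fin.last d)) - (∑ j, θ j) * ξ (Fin.last d) := by
      rw [Finset.sum_mul, ← Finset.sum_sub_distrib]
      refine Finset.sum_congr rfl fun j _ => ?_
      simp [hc]; ring
    rw [this, hθ1, ← hξN]; ring
  set S : ℝ := ∑ j, θ j * max (c j) 0 with hS
  have hSnonneg : 0 ≤ S :=
    Finset.sum_nonneg fun j _ => mul_nonneg (hθpos j).le (le_max_right _ _)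
  have hSS' : S = ∑ j, θ j * max (-c j) 0 := by
    have : S - ∑ j, θ j * max (-c j) 0 = ∑ j, θ j * c j := by
      rw [hS, ← Finset.sum_sub_distrib]
      refine Finset.sum_congr rfl fun j _ => ?_
      rw [← mul_sub, max_zero_sub_eq_self]
    have h0 := hsum0
    linarith [this]
  have hSge : ∀ j, θ j * max (c j) 0 ≤ S := by
    intro j
    exact Finset.single_le_sum
      (fun i _ => mul_nonneg (hθpos i).le (le_max_right _ _)) (Finset.mem_univ j)
  have hSge' : ∀ j, θ j * max (-c j) 0 ≤ S := by
    intro j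
    rw [hSS']
    exact Finset.single_le_sum (f := fun i => θ i * max (-c i) 0)
      (fun i _ => mul_nonneg (hθpos i).le (le_max_right _ _)) (Finset.mem_univ j)
  have hSpos : ∀ j, c j ≠ 0 → 0 < S := by
    intro j hj
    rcases lt_or_gt_of_ne hj with h | h
    · have : 0 < θ j * max (-c j) 0 := mul_pos (hθpos j) (by simp; linarith)
      linarith [hSge' j]
    · have : 0 < θ j * max (c j) 0 := mul_pos (hθpos j) (by simp; linarith)
      linarith [hSge j]
  -- the candidate α
  set α : Fin (m + 1) → Fin (m + 1) → ℝ := fun i j =>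
    if c i * c j < 0 then θ i * θ j * |c i - c j| / S
    else if i = j ∧ c j = 0 then θ j else 0 with hα
  have hαsymm : ∀ i j, α i j = α j i := by
    intro i j
    simp only [hα]
    by_cases h : c i * c j < 0
    · rw [if_pos h, if_pos (by rwa [mul_comm]), abs_sub_comm]
      ring
    · have hij' : ¬ c j * c i < 0 := by rwa [mul_comm]
      rw [if_neg h, if_neg hij']
      by_cases h2 : i = j
      · subst h2; rfl
      · rw [if_neg (fun hh => h2 hh.1), if_neg (fun hh => h2 hh.1.symm)]
  have hαnonneg : ∀ i j, 0 ≤ α i j := by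
    intro i j
    simp only [hα]
    split_ifs with h1 h2
    · exact div_nonneg (mul_nonneg (mul_nonneg (hθpos i).le (hθpos j).le) (abs_nonneg _))
        hSnonneg
    · exact (hθpos j).le
    · exact le_refl 0
  -- pointwise description of α i j * β i j
  have hprod : ∀ i j, c j ≠ 0 →
      α i j * β i j = θ j * (θ i * max (if 0 < c j then -c i else c i) 0) / S := by
    intro i j hcj
    have hS0 : 0 < S := hSpos j hcj
    rcases lt_or_gt_of_ne hcj with hneg | hpos
    · -- c j < 0
      rw [if_neg (by linarith)]
      simp only [hα, hβc]
      by_cases h : c i * c j < 0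
      · have hci : 0 < c i := by
          rcases lt_trichotomy (c i) 0 with h' | h' | h'
          · nlinarith
          · exfalso; rw [h'] at h; simp at h
          · exact h'
        rw [if_pos h, if_pos h]
        have hd : c i - c j ≠ 0 := by linarith
        have habs : |c i - c j| = c i - c j := abs_of_pos (by linarith)
        rw [habs, max_eq_left hci.le]
        field_simp
      · have hci : ¬ (0 < c i) := by
          intro h'
          exact h (mul_neg_of_pos_of_neg h' hneg)
        rw [if_neg h, if_neg h]
        have : max (c i) 0 = 0 := max_eq_right (by linarith)
        rw [this]
        by_cases h2 : i = j ∧ c j = 0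
        · exact absurd h2.2 hcj
        · simp [h2]
    · -- c j > 0
      rw [if_pos hpos]
      simp only [hα, hβc]
      by_cases h : c i * c j < 0
      · have hci : c i < 0 := by nlinarith
        rw [if_pos h, if_pos h]
        have hd : c i - c j ≠ 0 := by linarith
        have habs : |c i - c j| = -(c i - c j) := abs_of_neg (by linarith)
        rw [habs, max_eq_left (by linarith)]
        field_simp
      · have hci : ¬ (c i < 0) := by
          intro h'
          exact h (mul_neg_of_neg_of_pos h' hpos)
        rw [if_neg h, if_neg h]
        have : max (-c i) 0 = 0 := max_eq_right (by linarith)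
        rw [this]
        by_cases h2 : i = j ∧ c j = 0
        · exact absurd h2.2 hcj
        · simp [h2]
  -- the key marginal identity
  have hθα : ∀ j, θ j = ∑ i, α i j * β i j := by
    intro j
    by_cases hcj : c j = 0
    · rw [Finset.sum_eq_single j]
      · simp [hα, hβc, hcj]
      · intro i _ hij
        simp [hα, hβc, hcj, hij]
      · intro h; exact absurd (Finset.mem_univ j) h
    · have hS0 : 0 < S := hSpos j hcj
      have : ∑ i, α i j * β i j
          = ∑ i, θ j * (θ i * max (if 0 < c j then -c i else c i) 0) / S := by
        exact Finset.sum_congr rfl fun i _ => hprod i j hcj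
      rw [this]
      rcases lt_or_gt_of_ne hcj with hneg | hpos
      · have hif : (if 0 < c j then -c j else c j) = c j := if_neg (by linarith)
        have : ∑ i, θ j * (θ i * max (if 0 < c j then -c i else c i) 0) / S
            = θ j * (∑ i, θ i * max (c i) 0) / S := by
          rw [Finset.mul_sum, Finset.sum_div]
          refine Finset.sum_congr rfl fun i _ => ?_
          rw [if_neg (by linarith)]
        rw [this, ← hS, mul_div_assoc, div_self hS0.ne', mul_one]
      · have : ∑ i, θ j * (θ i * max (if 0 < c j then -c i else c i) 0) / S
            = θ j * (∑ i, θ i * max (-c i) 0) / S := by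
          rw [Finset.mul_sum, Finset.sum_div]
          refine Finset.sum_congr rfl fun i _ => ?_
          rw [if_pos hpos]
        rw [this, ← hSS', mul_div_assoc, div_self hS0.ne', mul_one]
  have hθle : ∀ i j, i ≠ j → θ i + θ j ≤ 1 := by
    intro i j hij
    have : ∑ k ∈ ({i, j} : Finset (Fin (m+1))), θ k ≤ ∑ k, θ k :=
      Finset.sum_le_sum_of_subset_of_nonneg (Finset.subset_univ _)
        (fun k _ _ => (hθpos k).le)
    rwa [Finset.sum_pair hij, hθ1] at this
  have hαle1 : ∀ i j, α i j ≤ 1 := by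
    intro i j
    simp only [hα]
    split_ifs with h1 h2
    · -- c i * c j < 0
      have hij : i ≠ j := by
        intro hh; subst hh; nlinarith
      have hS0 : 0 < S := hSpos j (by intro hh; rw [hh] at h1; simp at h1)
      rw [div_le_one hS0]
      rcases lt_or_ge (c i) 0 with hci | hci
      · have hcj : 0 < c j := by nlinarith
        have habs : |c i - c j| = c j - c i := by rw [abs_sub_comm]; exact abs_of_pos (by linarith)
        have h1' : θ i * (θ j * c j) ≤ θ i * S := by
          have := hSge j
          rw [max_eq_left hcj.le] at this
          exact mul_le_mul_of_nonneg_left this (hθpos i).le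
        have h2' : θ j * (θ i * (-c i)) ≤ θ j * S := by
          have := hSge' i
          rw [max_eq_left (by linarith)] at this
          exact mul_le_mul_of_nonneg_left this (hθpos j).le
        have h3' : (θ i + θ j) * S ≤ 1 * S :=
          mul_le_mul_of_nonneg_right (hθle i j hij) hS0.le
        nlinarith [habs]
      · have hcipos : 0 < c i := by
          rcases hci.lt_or_eq with h' | h'
          · exact h'
          · rw [← h'] at h1; simp at h1
        have hcj : c j < 0 := by nlinarith
        have habs : |c i - c j| = c i - c j := abs_of_pos (by linarith)
        have h1' : θ j * (θ i * c i) ≤ θ j * S := by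
          have := hSge i
          rw [max_eq_left hcipos.le] at this
          exact mul_le_mul_of_nonneg_left this (hθpos j).le
        have h2' : θ i * (θ j * (-c j)) ≤ θ i * S := by
          have := hSge' j
          rw [max_eq_left (by linarith)] at this
          exact mul_le_mul_of_nonneg_left this (hθpos i).le
        have h3' : (θ i + θ j) * S ≤ 1 * S :=
          mul_le_mul_of_nonneg_right (hθle i j hij) hS0.le
        nlinarith [habs]
    · exact (hθ j).2
    · norm_num
  refine ⟨α, fun i j => ⟨hαnonneg i j, hαle1 i j⟩, hαsymm, ?_, ?_, hθα, ?_⟩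
  · -- β = 0 → α = 0
    intro i j hβ0
    rw [hβc] at hβ0
    simp only [hα]
    split_ifs at hβ0 with h1 h2
    · exfalso
      have hci : c i ≠ 0 := by intro hh; rw [hh] at h1; simp at h1
      have hd : c i - c j ≠ 0 := by
        intro hh
        have : c i = c j := by linarith
        rw [this] at h1; nlinarith
      exact hci (by field_simp at hβ0; simpa using hβ0)
    · norm_num at hβ0
    · rw [if_neg h1, if_neg h2]
  · -- sum over Iic equals 1
    have hgdiag : ∀ j, α j j * β j j = α j j := by
      intro j
      by_cases hcj : c j = 0
      · rw [hβc, if_neg (by rw [hcj]; simp), if_pos ⟨rfl, hcj⟩, mul_one]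
      · have : α j j = 0 := by
          simp only [hα]
          rw [if_neg (by nlinarith [sq_nonneg (c j), mul_self_nonneg (c j)]),
            if_neg (by tauto)]
        rw [this, zero_mul]
    have hpair : ∀ i j, i ≠ j → α i j * β i j + α j i * β j i = α i j := by
      intro i j hij
      by_cases h : c i * c j < 0
      · have hd : c i - c j ≠ 0 := by
          intro hh
          have : c i = c j := by linarith
          rw [this] at h; nlinarith
        have hd2 : c j - c i ≠ 0 := fun hh => hd (by linarith)
        have hβsum : β i j + β j i = 1 := by
          rw [hβc, hβc, if_pos h, if_pos (by rwa [mul_comm]), div_add_div _ _ hd hd2,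
            div_eq_one_iff_eq (mul_ne_zero hd hd2)]
          ring
        rw [← hαsymm i j, ← mul_add, hβsum, mul_one]
      · have hzi : α i j = 0 := by
          simp only [hα]; rw [if_neg h, if_neg (by tauto)]
        have hzj : α j i = 0 := by rw [← hαsymm i j]; exact hzi
        rw [hzi, hzj]; ring
    have htotal : ∑ j, ∑ i, α i j * β i j = 1 := by
      rw [← hθ1]
      exact Finset.sum_congr rfl fun j _ => (hθα j).symm
    -- split each inner sum
    have hsplit : ∑ j, ∑ i, α i j * β i j
        = ∑ j, ∑ i ∈ Finset.Iic j, α i j * β i j + ∑ j, ∑ i ∈ Finset.Ioi j, α i j * β i j := by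
      rw [← Finset.sum_add_distrib]
      exact Finset.sum_congr rfl fun j _ => univ_split (fun i => α i j * β i j) j
    have hIic : ∀ j, ∑ i ∈ Finset.Iic j, α i j * β i j
        = ∑ i ∈ Finset.Iio j, α i j * β i j + α j j * β j j := by
      intro j
      rw [← Finset.Iio_insert, Finset.sum_insert (by simp), add_comm]
    have hswap : ∑ j, ∑ i ∈ Finset.Ioi j, α i j * β i j
        = ∑ j, ∑ i ∈ Finset.Iio j, α j i * β j i :=
      (tri_swap (fun j i => α j i * β j i)).symm
    calc ∑ j, ∑ i ∈ Finset.Iic j, α i j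
        = ∑ j, (∑ i ∈ Finset.Iio j, α i j + α j j) := by
          refine Finset.sum_congr rfl fun j _ => ?_
          rw [← Finset.Iio_insert, Finset.sum_insert (by simp), add_comm]
      _ = ∑ j, (∑ i ∈ Finset.Iio j, (α i j * β i j + α j i * β j i) + α j j * β j j) := by
          refine Finset.sum_congr rfl fun j _ => ?_
          congr 1
          · refine Finset.sum_congr rfl fun i hi => ?_
            exact (hpair i j (Finset.mem_Iio.mp hi).ne).symm
          · exact (hgdiag j).symm
      _ = ∑ j, ∑ i ∈ Finset.Iic j, α i j * β i j + ∑ j, ∑ i ∈ Finset.Ioi j, α i j * β i j := by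
          rw [hswap, ← Finset.sum_add_distrib]
          refine Finset.sum_congr rfl fun j _ => ?_
          rw [hIic j, Finset.sum_add_distrib]
          ring
      _ = 1 := by rw [← hsplit, htotal]
  · -- the ξ identity
    have expand : ∑ i, ∑ j, α i j • (β i j • ξv j + β j i • ξv i)
        = (∑ i, ∑ j, (α i j * β i j) • ξv j) + ∑ i, ∑ j, (α i j * β j i) • ξv i := by
      rw [← Finset.sum_add_distrib]
      refine Finset.sum_congr rfl fun i _ => ?_
      rw [← Finset.sum_add_distrib]
      refine Finset.sum_congr rfl fun j _ => ?_
      rw [smul_add, mul_smul, mul_smul]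
    have first : ∑ i, ∑ j, (α i j * β i j) • ξv j = ξ := by
      rw [Finset.sum_comm]
      rw [hξ]
      refine Finset.sum_congr rfl fun j _ => ?_
      rw [← Finset.sum_smul, ← hθα j]
    have second : ∑ i, ∑ j, (α i j * β j i) • ξv i = ξ := by
      have : ∀ i, ∑ j, (α i j * β j i) • ξv i = θ i • ξv i := by
        intro i
        rw [← Finset.sum_smul]
        congr 1
        rw [hθα i]
        exact Finset.sum_congr rfl fun j _ => by rw [hαsymm i j]
      rw [Finset.sum_congr rfl fun i _ => this i, ← hξ]
    rw [expand, first, second]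
    funext k
    simp only [Pi.smul_apply, Pi.add_apply, smul_eq_mul]
    ring
end

section
/- Let H = {y ∈ ℝ^N : y^N = c} be an affine hyperplane, let S be the intersection of H with the convex hull of finitely many points ξ_0,…,ξ_m ∈ ℝ^N. Then every extreme point of the convex polytope S is either some ξ_j with ξ_j^N = c, or the unique point of intersection of H with a segment [ξ_i, ξ_j] where ξ_i^N and ξ_j^N lie strictly on opposite sides of c. -/
open Set

/-- Auxiliary induction: if `y` lies on the hyperplane, is "extreme" in the slice `S`,
and is a convex combination of the `ξv i` with support of size `n`, then the conclusion holds. -/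
private lemma slice_aux (d m : ℕ) (ξv : Fin (m + 1) → (Fin (d + 1) → ℝ)) (c : ℝ)
    (y : Fin (d + 1) → ℝ) (hyH : y (Fin.last d) = c)
    (hext : ∀ x₁ ∈ ({z : Fin (d+1) → ℝ | z (Fin.last d) = c} ∩ convexHull ℝ (Set.range ξv)),
      ∀ x₂ ∈ ({z : Fin (d+1) → ℝ | z (Fin.last d) = c} ∩ convexHull ℝ (Set.range ξv)),
      y ∈ openSegment ℝ x₁ x₂ → x₁ = y ∧ x₂ = y) :
    ∀ n : ℕ, ∀ w : Fin (m + 1) → ℝ, (∀ i, 0 ≤ w i) → (∑ i, w i = 1) →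
      (∑ i, w i • ξv i = y) → (Finset.univ.filter fun i => 0 < w i).card = n →
      (∃ j, y = ξv j ∧ ξv j (Fin.last d) = c) ∨
      (∃ i j, (ξv i (Fin.last d) - c) * (ξv j (Fin.last d) - c) < 0 ∧
        y ∈ segment ℝ (ξv i) (ξv j) ∧ y (Fin.last d) = c ∧
        (∀ z ∈ segment ℝ (ξv i) (ξv j), z (Fin.last d) = c → z = y)) := by
  intro n
  induction n using Nat.strong_induction_on with
  | _ n ih =>
  intro w hw hwsum hwrep hcard
  set S : Set (Fin (d+1) → ℝ) :=
    {z : Fin (d+1) → ℝ | z (Fin.last d) = c} ∩ convexHull ℝ (Set.range ξv) with hSdef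
  set T : Finset (Fin (m + 1)) := Finset.univ.filter fun i => 0 < w i with hTdef
  have hmemT : ∀ i, i ∈ T ↔ 0 < w i := by
    intro i; simp [hTdef]
  have hzero : ∀ i ∉ T, w i = 0 := by
    intro i hi
    rcases (hw i).lt_or_eq with h | h
    · exact absurd ((hmemT i).mpr h) hi
    · exact h.symm
  have hsumT : ∑ i ∈ T, w i = 1 := by
    rw [← hwsum]
    exact Finset.sum_subset (Finset.subset_univ T) (fun i _ hi => hzero i hi)
  have hTne : T.Nonempty := by
    by_contra h
    rw [Finset.not_nonempty_iff_eq_empty] at h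
    rw [h, Finset.sum_empty] at hsumT
    norm_num at hsumT
  have hlast : ∑ i, w i * ξv i (Fin.last d) = c := by
    have := congrFun hwrep (Fin.last d)
    simpa [Finset.sum_apply] using this.trans hyH
  -- case on the support size
  rcases eq_or_ne n 1 with h1 | h1
  · -- one point: y = ξv a
    subst h1
    obtain ⟨a, ha⟩ := Finset.card_eq_one.mp hcard
    rw [hTdef] at ha  -- not needed maybe
    have hwa : w a = 1 := by
      have : ∑ i ∈ T, w i = w a := by rw [show T = {a} from ha, Finset.sum_singleton]
      rw [this] at hsumT; exact hsumT
    have hya : y = ξv a := by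
      rw [← hwrep]
      rw [← Finset.sum_subset (Finset.subset_univ T) (fun i _ hi => by simp [hzero i hi])]
      rw [show T = {a} from ha, Finset.sum_singleton, hwa, one_smul]
    left
    exact ⟨a, hya, by rw [← hya]; exact hyH⟩
  rcases eq_or_ne n 2 with h2 | h2
  · -- two points
    subst h2
    obtain ⟨a, b, hab, hTab⟩ := Finset.card_eq_two.mp hcard
    have haT : a ∈ T := by rw [show T = {a,b} from hTab]; simp
    have hbT : b ∈ T := by rw [show T = {a,b} from hTab]; simp
    have hwa : 0 < w a := (hmemT a).mp haT
    have hwb : 0 < w b := (hmemT b).mp hbT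
    have hsum2 : w a + w b = 1 := by
      rw [← hsumT, show T = {a,b} from hTab, Finset.sum_pair hab]
    have hrep2 : w a • ξv a + w b • ξv b = y := by
      rw [← hwrep,
        ← Finset.sum_subset (Finset.subset_univ T) (fun i _ hi => by simp [hzero i hi]),
        show T = {a,b} from hTab, Finset.sum_pair hab]
    set A := ξv a (Fin.last d) with hA
    set B := ξv b (Fin.last d) with hB
    have hc2 : w a * A + w b * B = c := by
      have := congrFun hrep2 (Fin.last d)
      simpa using this.trans hyH
    have hkey : w a * (A - c) + w b * (B - c) = 0 := by
      have : (w a + w b) * c = c := by rw [hsum2, one_mul]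
      nlinarith [hc2]
    by_cases hAc : A = c
    · -- both endpoints on the hyperplane
      have hBc : B = c := by
        rw [hAc] at hkey
        have : w b * (B - c) = 0 := by linarith
        rcases mul_eq_zero.mp this with h | h
        · exact absurd h (ne_of_gt hwb)
        · linarith
      have haS : ξv a ∈ S := ⟨hAc, subset_convexHull ℝ _ (Set.mem_range_self a)⟩
      have hbS : ξv b ∈ S := ⟨hBc, subset_convexHull ℝ _ (Set.mem_range_self b)⟩
      have hyseg : y ∈ openSegment ℝ (ξv a) (ξv b) :=
        ⟨w a, w b, hwa, hwb, hsum2, hrep2⟩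
      obtain ⟨hea, _⟩ := hext _ haS _ hbS hyseg
      exact Or.inl ⟨a, hea.symm, hAc⟩
    · -- endpoints strictly on opposite sides
      have hBc : B ≠ c := by
        intro h
        rw [h] at hkey
        have : w a * (A - c) = 0 := by linarith
        rcases mul_eq_zero.mp this with h' | h'
        · exact absurd h' (ne_of_gt hwa)
        · exact hAc (by linarith)
      have hB2 : 0 < (B - c) * (B - c) := mul_self_pos.mpr (sub_ne_zero.mpr hBc)
      have hprod : (A - c) * (B - c) < 0 := by
        have h1 : w a * (A - c) = -(w b * (B - c)) := by linarith
        have h3 : w a * ((A - c) * (B - c)) = -(w b * ((B - c) * (B - c))) := by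
          linear_combination (B - c) * h1
        have h4 : w a * ((A - c) * (B - c)) < 0 := by nlinarith [mul_pos hwb hB2]
        by_contra h
        push_neg at h
        nlinarith [mul_nonneg hwa.le h]
      right
      refine ⟨a, b, hprod, ⟨w a, w b, le_of_lt hwa, le_of_lt hwb, hsum2, hrep2⟩, hyH, ?_⟩
      intro z hz hzc
      obtain ⟨t₁, t₂, ht₁, ht₂, hts, hzrep⟩ := hz
      have hzlast : t₁ * A + t₂ * B = c := by
        have := congrFun hzrep (Fin.last d)
        simpa using this.trans hzc
      have hBA : B - A ≠ 0 := by
        intro h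
        have : A = B := by linarith
        rw [this] at hprod
        nlinarith
      have hkey2 : (t₂ - w b) * (B - A) = 0 := by
        linear_combination hzlast - hc2 - A * hts + A * hsum2
      have ht2 : t₂ = w b := by
        rcases mul_eq_zero.mp hkey2 with h | h
        · linarith
        · exact absurd h hBA
      have ht1 : t₁ = w a := by linarith
      rw [← hzrep, ht1, ht2, hrep2]
  -- |T| ≥ 3
  have h3 : 3 ≤ T.card := by
    rw [hcard]
    rcases Nat.lt_or_ge n 3 with h | h
    · interval_cases n
      · rw [Finset.card_eq_zero] at hcard
        exact absurd hcard (Finset.nonempty_iff_ne_empty.mp hTne)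
      · exact absurd rfl h1
      · exact absurd rfl h2
    · exact h
  obtain ⟨t3, ht3T, ht3card⟩ := Finset.exists_subset_card_eq h3
  obtain ⟨a, b, e, hab, hae, hbe, ht3⟩ := Finset.card_eq_three.mp ht3card
  have haT : a ∈ T := ht3T (by rw [ht3]; simp)
  have hbT : b ∈ T := ht3T (by rw [ht3]; simp)
  have heT : e ∈ T := ht3T (by rw [ht3]; simp)
  set f : Fin (m + 1) → ℝ := fun i => ξv i (Fin.last d) with hf
  -- construct a nonzero perturbation direction δ
  have hdelta : ∃ δ : Fin (m + 1) → ℝ, (∀ i, i ≠ a → i ≠ b → i ≠ e → δ i = 0) ∧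
      (∑ i, δ i = 0) ∧ (∑ i, δ i * f i = 0) ∧ δ ≠ 0 := by
    by_cases hAB : f a = f b
    · refine ⟨fun i => (if i = a then (1:ℝ) else 0) + (if i = b then (-1:ℝ) else 0),
        ?_, ?_, ?_, ?_⟩
      · intro i hia hib _; simp [hia, hib]
      · simp [Finset.sum_add_distrib, Finset.sum_ite_eq']
      · simp only [add_mul, ite_mul, one_mul, neg_one_mul, zero_mul,
          Finset.sum_add_distrib, Finset.sum_ite_eq', Finset.mem_univ, if_true]
        rw [hAB]; ring
      · intro h
        have := congrFun h a
        simp [hab] at this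
    · refine ⟨fun i => (if i = a then f b - f e else 0) + (if i = b then f e - f a else 0)
          + (if i = e then f a - f b else 0), ?_, ?_, ?_, ?_⟩
      · intro i hia hib hie; simp [hia, hib, hie]
      · simp only [Finset.sum_add_distrib, Finset.sum_ite_eq', Finset.mem_univ, if_true]
        ring
      · simp only [add_mul, ite_mul, zero_mul, Finset.sum_add_distrib,
          Finset.sum_ite_eq', Finset.mem_univ, if_true]
        ring
      · intro h
        have := congrFun h e
        simp [hbe.symm, Ne.symm hae] at this
        exact hAB (by linarith)
  obtain ⟨δ, hδsupp, hδsum, hδlast, hδne⟩ := hdelta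
  have hδT : ∀ i ∉ T, δ i = 0 := by
    intro i hi
    refine hδsupp i ?_ ?_ ?_ <;> rintro rfl <;> exact hi (by assumption)
  set v : Fin (d + 1) → ℝ := ∑ i, δ i • ξv i with hv
  have hvlast : v (Fin.last d) = 0 := by
    rw [hv]
    simpa [Finset.sum_apply] using hδlast
  by_cases hvz : v = 0
  · -- reduce the support
    have hneg : ∃ i, δ i < 0 := by
      by_contra h
      push_neg at h
      apply hδne
      funext i
      have := (Finset.sum_eq_zero_iff_of_nonneg (fun i _ => h i)).mp hδsum i (Finset.mem_univ i)
      exact this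
    set N : Finset (Fin (m + 1)) := Finset.univ.filter fun i => δ i < 0 with hN
    have hNne : N.Nonempty := by
      obtain ⟨i, hi⟩ := hneg
      exact ⟨i, by simp [hN, hi]⟩
    obtain ⟨i₀, hi₀N, hi₀min⟩ := N.exists_min_image (fun i => w i / (-δ i)) hNne
    have hδi₀ : δ i₀ < 0 := by simpa [hN] using hi₀N
    have hi₀T : i₀ ∈ T := by
      by_contra h
      rw [hδT i₀ h] at hδi₀
      exact lt_irrefl 0 hδi₀
    have hwi₀ : 0 < w i₀ := (hmemT i₀).mp hi₀T
    set t : ℝ := w i₀ / (-δ i₀) with htdef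
    have ht : 0 < t := div_pos hwi₀ (by linarith)
    set w' : Fin (m + 1) → ℝ := fun i => w i + t * δ i with hw'
    have hw'0 : ∀ i, 0 ≤ w' i := by
      intro i
      rcases lt_or_ge (δ i) 0 with h | h
      · have hiN : i ∈ N := by simp [hN, h]
        have := hi₀min i hiN
        have h2 : t * (-δ i) ≤ w i := by
          rw [← le_div_iff₀ (by linarith : (0:ℝ) < -δ i)]
          exact this
        simp only [hw']
        nlinarith
      · have := hw i
        have := mul_nonneg (le_of_lt ht) h
        simp only [hw']
        linarith
    have hw'sum : ∑ i, w' i = 1 := by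
      simp only [hw', Finset.sum_add_distrib, ← Finset.mul_sum, hδsum, hwsum, mul_zero, add_zero]
    have hw'rep : ∑ i, w' i • ξv i = y := by
      have : ∑ i, w' i • ξv i = (∑ i, w i • ξv i) + t • v := by
        rw [hv, Finset.smul_sum, ← Finset.sum_add_distrib]
        congr 1
        funext i
        simp only [hw', add_smul, smul_smul]
      rw [this, hvz, smul_zero, add_zero, hwrep]
    have hw'i₀ : w' i₀ = 0 := by
      have hne : -δ i₀ ≠ 0 := ne_of_gt (by linarith)
      have h5 : t * -δ i₀ = w i₀ := by rw [htdef]; exact div_mul_cancel₀ _ hne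
      have h6 : t * δ i₀ = -w i₀ := by linear_combination -h5
      simp only [hw']
      linarith
    have hsub : (Finset.univ.filter fun i => 0 < w' i) ⊂ T := by
      constructor
      · intro i hi
        simp only [Finset.mem_filter, Finset.mem_univ, true_and] at hi
        by_contra h
        rw [hw'] at hi
        simp only at hi
        rw [hzero i h, hδT i h] at hi
        simp at hi
      · intro h
        have := h hi₀T
        simp only [Finset.mem_filter, Finset.mem_univ, true_and] at this
        rw [hw'i₀] at this
        exact lt_irrefl 0 this
    have hlt : (Finset.univ.filter fun i => 0 < w' i).card < n := by
      rw [← hcard]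
      exact Finset.card_lt_card hsub
    exact ih _ hlt w' hw'0 hw'sum hw'rep rfl
  · -- perturb along v and contradict extremality
    exfalso
    obtain ⟨j₀, hj₀T, hj₀min⟩ := T.exists_min_image w hTne
    have hwj₀ : 0 < w j₀ := (hmemT j₀).mp hj₀T
    set M : ℝ := |δ a| + |δ b| + |δ e| + 1 with hM
    have hM0 : 0 < M := by positivity
    have hMi : ∀ i, |δ i| ≤ M := by
      intro i
      rcases eq_or_ne i a with rfl | hia
      · have := abs_nonneg (δ b); have := abs_nonneg (δ e); simp only [hM]; linarith
      rcases eq_or_ne i b with rfl | hib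
      · have := abs_nonneg (δ a); have := abs_nonneg (δ e); simp only [hM]; linarith
      rcases eq_or_ne i e with rfl | hie
      · have := abs_nonneg (δ a); have := abs_nonneg (δ b); simp only [hM]; linarith
      · rw [hδsupp i hia hib hie]
        simp only [abs_zero, hM]
        positivity
    set ε : ℝ := w j₀ / M with hε
    have hε0 : 0 < ε := div_pos hwj₀ hM0
    have hεM : ε * M = w j₀ := div_mul_cancel₀ _ (ne_of_gt hM0)
    have hbound : ∀ i, ε * |δ i| ≤ w i := by
      intro i
      by_cases hiT : i ∈ T
      · calc ε * |δ i| ≤ ε * M := by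
              exact mul_le_mul_of_nonneg_left (hMi i) (le_of_lt hε0)
          _ = w j₀ := hεM
          _ ≤ w i := hj₀min i hiT
      · rw [hδT i hiT, hzero i hiT]
        simp
    have hnn : ∀ (s : ℝ), |s| ≤ ε → ∀ i, 0 ≤ w i + s * δ i := by
      intro s hs i
      have h1 : ε * |δ i| ≤ w i := hbound i
      have h2 : |s * δ i| ≤ ε * |δ i| := by
        rw [abs_mul]
        exact mul_le_mul_of_nonneg_right hs (abs_nonneg _)
      have := neg_abs_le (s * δ i)
      linarith
    -- the two perturbed points
    have hmem : ∀ (s : ℝ), |s| ≤ ε → y + s • v ∈ S := by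
      intro s hs
      constructor
      · show (y + s • v) (Fin.last d) = c
        simp [hvlast, hyH]
      · apply mem_convexHull_of_exists_fintype (fun i => w i + s * δ i) ξv (hnn s hs)
          ?_ (fun i => Set.mem_range_self i) ?_
        · simp [Finset.sum_add_distrib, ← Finset.mul_sum, hδsum, hwsum]
        · show ∑ i, (w i + s * δ i) • ξv i = y + s • ∑ i, δ i • ξv i
          rw [← hwrep, Finset.smul_sum, ← Finset.sum_add_distrib]
          exact Finset.sum_congr rfl fun i _ => by simp [add_smul, smul_smul]
    have hp₁ : y + ε • v ∈ S := hmem ε (by rw [abs_of_pos hε0])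
    have hp₂ : y + (-ε) • v ∈ S := hmem (-ε) (by rw [abs_neg, abs_of_pos hε0])
    have hyopen : y ∈ openSegment ℝ (y + ε • v) (y + (-ε) • v) := by
      refine ⟨1/2, 1/2, by norm_num, by norm_num, by norm_num, ?_⟩
      module
    obtain ⟨h₁, _⟩ := hext _ hp₁ _ hp₂ hyopen
    have : ε • v = 0 := by
      have := congrArg (fun z => z - y) h₁
      simpa [add_sub_cancel_left] using this
    rcases smul_eq_zero.mp this with h | h
    · exact absurd h (ne_of_gt hε0)
    · exact hvz h

/-- extreme points of the slice of a polytope by the hyperplane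
`{y : y^N = c}` are either vertices lying on the hyperplane, or intersections of the
hyperplane with a segment whose endpoints lie strictly on opposite sides. -/
theorem extreme_points_of_hyperplane_slice
    (d m : ℕ) (ξv : Fin (m + 1) → (Fin (d + 1) → ℝ)) (c : ℝ)
    (H : Set (Fin (d + 1) → ℝ)) (hH : H = {y | y (Fin.last d) = c})
    (S : Set (Fin (d + 1) → ℝ))
    (hS : S = H ∩ convexHull ℝ (Set.range ξv)) :
    ∀ y ∈ S.extremePoints ℝ,
      (∃ j, y = ξv j ∧ ξv j (Fin.last d) = c) ∨
      (∃ i j, (ξv i (Fin.last d) - c) * (ξv j (Fin.last d) - c) < 0 ∧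
        y ∈ segment ℝ (ξv i) (ξv j) ∧ y (Fin.last d) = c ∧
        (∀ z ∈ segment ℝ (ξv i) (ξv j), z (Fin.last d) = c → z = y)) := by
  subst hH hS
  intro y hy
  rw [mem_extremePoints] at hy
  obtain ⟨⟨hyH, hyC⟩, hext⟩ := hy
  rw [convexHull_range_eq_exists_affineCombination] at hyC
  obtain ⟨s, w₀, hw₀, hw₁, hwy⟩ := hyC
  rw [Finset.affineCombination_eq_linear_combination s ξv w₀ hw₁] at hwy
  set w : Fin (m + 1) → ℝ := fun i => if i ∈ s then w₀ i else 0 with hwdef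
  have hw : ∀ i, 0 ≤ w i := by
    intro i
    simp only [hwdef]
    split
    · exact hw₀ i (by assumption)
    · exact le_refl 0
  have hwsum : ∑ i, w i = 1 := by
    rw [← hw₁]
    simp only [hwdef]
    rw [Finset.sum_ite_mem, Finset.univ_inter]
  have hwrep : ∑ i, w i • ξv i = y := by
    rw [← hwy]
    simp only [hwdef, ite_smul, zero_smul]
    rw [Finset.sum_ite_mem, Finset.univ_inter]
  exact slice_aux d m ξv c y hyH hext _ w hw hwsum hwrep rfl
end
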